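/- arXiv:2403.15967 — 3 statements merged into one kernel-verified Lean document; each statement's English description precedes it below -/
import Mathlib

section
/- Define a(n) by ∑_{n≥1} a(n) qⁿ = q·∏_{k≥1} (1−q^k)³(1−q^{7k})³. Then for all k ≥ 0 and n ≥ 1, a(7^k n) ≡ 0 (mod 7^k). -/
open Polynomial Finset

namespace Eta37

/-- Triangular numbers -/
def T : ℕ → ℕ
  | 0 => 0
  | k+1 => T k + (k+1)

lemma T_le (k : ℕ) : k ≤ T k := by
  induction k with
  | zero => simp [T]
  | succ k ih => rw [T]; omega

lemma T_succ (k : ℕ) : T (k+1) = T k + (k+1) := rfl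

lemma two_T (k : ℕ) : 2 * T k = k * (k+1) := by
  induction k with
  | zero => simp [T]
  | succ k ih => rw [T]; ring_nf; ring_nf at ih; omega

lemma T_7 (k : ℕ) : T (7*k+3) = 49 * T k + 6 := by
  have h1 := two_T (7*k+3)
  have h2 := two_T k
  nlinarith

lemma T_mod7 {k : ℕ} (h : T k % 7 = 6) : k % 7 = 3 := by
  have h1 := two_T k
  have h2 : k % 7 < 7 := Nat.mod_lt _ (by norm_num)
  have h3 : k * (k+1) % 7 = k % 7 * ((k % 7 + 1) % 7) % 7 := by
    conv_lhs => rw [Nat.mul_mod, Nat.add_mod]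
  set M := k * (k + 1) with hM
  interval_cases hk : k % 7 <;> omega

/-- Gaussian binomial coefficients as integer polynomials in q = X. -/
noncomputable def B : ℕ → ℕ → ℤ[X]
  | _, 0 => 1
  | 0, _+1 => 0
  | m+1, r+1 => B m (r+1) + X^(m-r) * B m r

@[simp] lemma B_zero (m : ℕ) : B m 0 = 1 := by cases m <;> simp [B]

lemma B_pascal1 (m r : ℕ) : B (m+1) (r+1) = B m (r+1) + X^(m-r) * B m r := by rw [B]

lemma B_of_lt {m r : ℕ} (h : m < r) : B m r = 0 := by
  induction m generalizing r with
  | zero => match r, h with | r+1, _ => simp [B]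
  | succ m ih =>
    match r, h with
    | r+1, h =>
      rw [B_pascal1, ih (by omega), ih (by omega), mul_zero, add_zero]

@[simp] lemma B_self (m : ℕ) : B m m = 1 := by
  induction m with
  | zero => simp
  | succ m ih =>
    cases m with
    | zero => simp [B_pascal1, B_of_lt]
    | succ m' => rw [B_pascal1, B_of_lt (by omega), ih, zero_add, Nat.sub_self, pow_zero, one_mul]

lemma B_one_geo (m : ℕ) : X * B m 1 + 1 = B m 1 + X^m := by
  induction m with
  | zero => simp [B]
  | succ m ih =>
    have h : B (m+1) 1 = B m 1 + X^m := by
      rw [B_pascal1]; simp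
    rw [h]; ring_nf; ring_nf at ih
    linear_combination ih

/-- second Pascal rule -/
lemma B_pascal2 (m : ℕ) : ∀ r : ℕ, B (m+1) (r+1) = X^(r+1) * B m (r+1) + B m r := by
  induction m with
  | zero =>
    intro r
    match r with
    | 0 => simp [B]
    | r+1 => simp [B, B_of_lt (show 0 < r+2 by omega), B_of_lt (show 0 < r+1 by omega)]
  | succ m ih =>
    intro r
    match r with
    | 0 =>
      -- B (m+2) 1 = X * B (m+1) 1 + 1
      rw [B_pascal1]
      simp only [B_zero, Nat.sub_zero, mul_one]
      linear_combination - B_one_geo (m+1)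
    | r'+1 =>
      -- goal: B (m+2) (r'+2) = X^(r'+2) * B (m+1) (r'+2) + B (m+1) (r'+1)
      have h0 := B_pascal1 (m+1) (r'+1)
      rw [show m+1-(r'+1) = m-r' by omega] at h0
      have h1 := ih (r'+1)
      have h2 := ih r'
      have h3 := B_pascal1 m (r'+1)
      have h4 := B_pascal1 m r'
      rcases le_or_gt (r'+1) m with hm | hm
      · have ha : (X:ℤ[X])^(m-r') * X^(r'+1) = X^(r'+1+1) * X^(m-(r'+1)) := by
          rw [← pow_add, ← pow_add]
          congr 1
          omega
        linear_combination h0 + h1 - X^(r'+1+1) * h3 + X^(m-r') * h2 - h4 + B m (r'+1) * ha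
      · have z1 : B m (r'+1) = 0 := B_of_lt (by omega)
        have z2 : B m (r'+2) = 0 := B_of_lt (by omega)
        rw [z1, z2] at h1 h3
        rw [z1] at h2 h4
        rw [show m-(r'+1) = 0 by omega] at h3
        linear_combination h0 + h1 - X^(r'+1+1) * h3 + X^(m-r') * h2 - h4

/-- double-step recurrence -/
lemma B_rec2 (m r : ℕ) :
    B (m+2) (r+2) = X^(r+2) * B m (r+2) + (1 + X^(m+1)) * B m (r+1) + X^(m-r) * B m r := by
  rw [show m+2 = (m+1)+1 by rfl, B_pascal2 (m+1) (r+1), B_pascal1 m (r+1), B_pascal1 m r]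
  rcases le_or_gt (r+1) m with hm | hm
  · have ha : (X:ℤ[X])^(r+2) * X^(m-(r+1)) = X^(m+1) := by
      rw [← pow_add]; congr 1; omega
    linear_combination (B m (r+1)) * ha
  · have z1 : B m (r+1) = 0 := B_of_lt (by omega)
    rw [z1]; ring

/-- partial Euler product -/
noncomputable def E (n : ℕ) : ℤ[X] := ∏ j ∈ Icc 1 n, (1 - X^j)

@[simp] lemma E_zero : E 0 = 1 := by simp [E]

lemma E_succ (n : ℕ) : E (n+1) = E n * (1 - X^(n+1)) := by
  rw [E, E, prod_Icc_succ_top (by omega)]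

lemma E_ne_zero (n : ℕ) : E n ≠ 0 := by
  induction n with
  | zero => simp
  | succ n ih =>
    rw [E_succ]
    refine mul_ne_zero ih ?_
    intro h
    have := congrArg (fun p => Polynomial.coeff p 0) h
    simp at this

/-- splitting off a tail of the product -/
lemma E_split {s n : ℕ} (h : s ≤ n) :
    ∃ w : ℤ[X], E n = E s * (1 + X^(s+1) * w) := by
  induction n with
  | zero =>
    interval_cases s
    exact ⟨0, by simp⟩
  | succ n ih =>
    rcases Nat.lt_or_ge s (n+1) with h' | h'
    · obtain ⟨w, hw⟩ := ih (by omega)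
      refine ⟨w * (1 - X^(n+1)) - X^(n-s), ?_⟩
      have hsucc := E_succ n
      have hX : (X:ℤ[X])^(s+1) * X^(n-s) = X^(n+1) := by
        rw [← pow_add]; congr 1; omega
      linear_combination hsucc + (1 - X^(n+1)) * hw + E s * hX
    · have : s = n+1 := by omega
      subst this
      exact ⟨0, by simp⟩

/-- the key product identity -/
lemma B_mul_E {m r : ℕ} (h : r ≤ m) : B m r * E r * E (m - r) = E m := by
  induction m generalizing r with
  | zero => interval_cases r; simp [B_zero]
  | succ m ih =>
    rcases r with _ | r
    · simp [B_zero]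
    rcases Nat.lt_or_ge m (r+1) with h' | h'
    · have : r + 1 = m + 1 := by omega
      rw [this, B_self, Nat.sub_self, E_zero, one_mul, mul_one]
    · -- r+1 ≤ m
      rw [B_pascal1]
      have I1 := ih (show r+1 ≤ m from h')
      have I2 := ih (show r ≤ m by omega)
      have hE1 : E (m+1 - (r+1)) = E (m - (r+1)) * (1 - X^(m-r)) := by
        rw [show m+1-(r+1) = (m - (r+1)) + 1 by omega, E_succ, show m-(r+1)+1 = m-r by omega]
      have hE1' : E (m - r) = E (m - (r+1)) * (1 - X^(m-r)) := by
        rw [show m-r = (m - (r+1)) + 1 by omega, E_succ, show m-(r+1)+1 = m-r by omega]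
      have hE2 : E (r+1) = E r * (1 - X^(r+1)) := E_succ r
      have hE3 : E (m+1) = E m * (1 - X^(m+1)) := E_succ m
      have hX : (X:ℤ[X])^(m-r) * X^(r+1) = X^(m+1) := by
        rw [← pow_add]; congr 1; omega
      linear_combination (1 - X^(m-r)) * I1 + X^(m-r) * (1 - X^(r+1)) * I2 +
        (B m (r+1) * E (r+1) + X^(m-r) * (1 - X^(r+1)) * B m r * E r) * hE1 -
        (X^(m-r) * (1 - X^(r+1)) * B m r * E r) * hE1' +
        (X^(m-r) * B m r * E (m+1-(r+1))) * hE2 - hE3 - E m * hX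

lemma unit_mul {a b : ℕ} (h : b ≤ a) (w₁ w₂ : ℤ[X]) :
    ∃ u : ℤ[X], (1 + X^a * w₁) * (1 + X^b * w₂) = 1 + X^b * u := by
  refine ⟨w₂ + X^(a-b) * w₁ * (1 + X^b * w₂), ?_⟩
  have hX : (X:ℤ[X])^b * X^(a-b) = X^a := by rw [← pow_add]; congr 1; omega
  linear_combination -(w₁ * (1 + X^b*w₂)) * hX

/-- the unit lemma: E n * B (2n+1) i  ≡ 1 mod X^(min i (2n+1-i) + 1) -/
lemma E_mul_B_unit {n i : ℕ} (h : i ≤ 2*n+1) :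
    ∃ u : ℤ[X], E n * B (2*n+1) i = 1 + X^(min i (2*n+1-i) + 1) * u := by
  have key := B_mul_E h
  rcases le_or_gt i n with hi | hi
  · -- min = i
    obtain ⟨w, hw⟩ := E_split (show 2*n+1-i ≤ 2*n+1 by omega)
    have hc : E (2*n+1-i) * (B (2*n+1) i * E i) = E (2*n+1-i) * (1 + X^(2*n+1-i+1) * w) := by
      rw [← hw]; linear_combination key
    have hBEi : B (2*n+1) i * E i = 1 + X^(2*n+1-i+1) * w :=
      mul_left_cancel₀ (E_ne_zero _) hc
    obtain ⟨w₂, hw₂⟩ := E_split hi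
    obtain ⟨u, hu⟩ := unit_mul (show i+1 ≤ 2*n+1-i+1 by omega) w w₂
    refine ⟨u, ?_⟩
    rw [min_eq_left (by omega)]
    calc E n * B (2*n+1) i = (B (2*n+1) i * E i) * (1 + X^(i+1) * w₂) := by
          rw [hw₂]; ring
    _ = 1 + X^(i+1) * u := by rw [hBEi]; exact hu
  · -- min = 2n+1-i
    obtain ⟨w, hw⟩ := E_split (show i ≤ 2*n+1 by omega)
    have hc : E i * (B (2*n+1) i * E (2*n+1-i)) = E i * (1 + X^(i+1) * w) := by
      rw [← hw]; linear_combination key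
    have hBE : B (2*n+1) i * E (2*n+1-i) = 1 + X^(i+1) * w :=
      mul_left_cancel₀ (E_ne_zero _) hc
    obtain ⟨w₂, hw₂⟩ := E_split (show 2*n+1-i ≤ n by omega)
    obtain ⟨u, hu⟩ := unit_mul (show (2*n+1-i)+1 ≤ i+1 by omega) w w₂
    refine ⟨u, ?_⟩
    rw [min_eq_right (by omega)]
    calc E n * B (2*n+1) i = (B (2*n+1) i * E (2*n+1-i)) * (1 + X^(2*n+1-i+1) * w₂) := by
          rw [hw₂]; ring
    _ = 1 + X^(2*n+1-i+1) * u := by rw [hBE]; exact hu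

/-- the exponent function: `t n i = T |i - (n+1)|` roughly (with `t n (n+1) = 0`). -/
def t (n i : ℕ) : ℕ := if i ≤ n then T (n - i) else T (i - (n+1))

/-- the coefficient of `z^i` in the finite Jacobi triple product `G n`. -/
noncomputable def c (n i : ℕ) : ℤ[X] := (-1)^(n+1+i) * (X^(t n i) * B (2*n+1) i)

lemma t1 (n i : ℕ) : t (n+1) i + i = (n+1) + t n i := by
  unfold t
  rcases le_or_gt i n with h | h
  · rw [if_pos (by omega), if_pos h, show n+1-i = (n-i)+1 by omega, T_succ]
    omega
  · rcases le_or_gt i (n+1) with h2 | h2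
    · have : i = n+1 := by omega
      subst this
      rw [if_pos le_rfl, if_neg (by omega)]
      simp [T]
    · rw [if_neg (by omega), if_neg (by omega), show i-(n+1) = (i-(n+1+1))+1 by omega, T_succ]
      omega

lemma t2 (n i : ℕ) : t (n+1) (i+1) = t n i := by
  unfold t
  rcases le_or_gt i n with h | h
  · rw [if_pos (by omega), if_pos h]
    congr 1
    omega
  · rw [if_neg (by omega), if_neg (by omega)]
    congr 1
    omega

lemma t3 {n d : ℕ} (h : d ≤ 2*n+1) : t (n+1) (d+2) + (2*n+1-d) = (n+1) + t n d := by
  unfold t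
  rcases le_or_gt (d+2) (n+1) with h1 | h1
  · rw [if_pos h1, if_pos (by omega), show n+1-(d+2) = n-1-d by omega,
      show n-d = (n-1-d)+1 by omega, T_succ]
    omega
  · rcases le_or_gt d n with h2 | h2
    · have hd : d = n := by omega
      subst hd
      rw [if_neg (by omega), if_pos le_rfl, show d+2-(d+1+1) = 0 by omega,
        show d-d = 0 by omega]
      show T 0 + (2*d+1-d) = d+1 + T 0
      rw [show T 0 = 0 from rfl]
      omega
    · rw [if_neg (by omega), if_neg (by omega), show d+2-(n+1+1) = (d-(n+1))+1 by omega, T_succ]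
      omega

lemma c_eq_zero {n i : ℕ} (h : 2*n+1 < i) : c n i = 0 := by
  rw [c, B_of_lt h, mul_zero, mul_zero]

lemma L0 (n : ℕ) : c (n+1) 0 = -X^(n+1) * c n 0 := by
  have ht : t (n+1) 0 = n+1 + t n 0 := by have := t1 n 0; omega
  rw [c, c, ht, B_zero, B_zero]
  rw [show (n+1)+1+0 = (n+1+0)+1 by ring, pow_succ, pow_add]
  ring

lemma L1 (n : ℕ) : c (n+1) 1 = (1 + X^(2*n+2)) * c n 0 - X^(n+1) * c n 1 := by
  have h1 := B_pascal1 (2*n+2) 0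
  simp only [Nat.sub_zero, B_zero, mul_one] at h1
  have h2 := B_pascal1 (2*n+1) 0
  simp only [Nat.sub_zero, B_zero, mul_one] at h2
  have hB : B (2*(n+1)+1) 1 = X * B (2*n+1) 1 + (1 + X^(2*n+2)) := by
    have h3 := B_one_geo (2*n+1)
    have e1 : B (2*(n+1)+1) 1 = B (2*n+2+1) 1 := by norm_num; ring_nf
    have e2 : B (2*n+2) 1 = B (2*n+1+1) 1 := by norm_num
    have e3 : (X:ℤ[X])^(2*n+2) = X^(2*n+1) * X := by rw [← pow_succ]
    linear_combination e1 + h1 + e2 + h2 - h3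
  have ht0 : t (n+1) 1 = t n 0 := t2 n 0
  have ht1 : t (n+1) 1 + 1 = (n+1) + t n 1 := t1 n 1
  rw [c, c, c, hB, ht0, B_zero]
  have hx : (X:ℤ[X])^(t n 0) * X = X^(n+1) * X^(t n 1) := by
    rw [← pow_succ, ← pow_add]
    congr 1
  linear_combination -((-1:ℤ[X]))^n * B (2*n+1) 1 * hx

lemma L2 {n d : ℕ} (h : d ≤ 2*n+1) :
    c (n+1) (d+2) = (1 + X^(2*n+2)) * c n (d+1) - X^(n+1) * c n (d+2) - X^(n+1) * c n d := by
  have hB : B (2*(n+1)+1) (d+2) = X^(d+2) * B (2*n+1) (d+2) + (1 + X^(2*n+2)) * B (2*n+1) (d+1)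
      + X^(2*n+1-d) * B (2*n+1) d := by
    have h := B_rec2 (2*n+1) d
    have e1 : B (2*(n+1)+1) (d+2) = B ((2*n+1)+2) (d+2) := by norm_num; ring_nf
    have e2 : (X:ℤ[X])^(2*n+1+1) = X^(2*n+2) := by norm_num
    linear_combination e1 + h + B (2*n+1) (d+1) * e2
  have ht1 : t (n+1) (d+2) + (d+2) = (n+1) + t n (d+2) := t1 n (d+2)
  have ht2 : t (n+1) (d+2) = t n (d+1) := t2 n (d+1)
  have ht3 : t (n+1) (d+2) + (2*n+1-d) = (n+1) + t n d := t3 h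
  rw [c, c, c, c, hB, ht2]
  have hx1 : (X:ℤ[X])^(t n (d+1)) * X^(d+2) = X^(n+1) * X^(t n (d+2)) := by
    rw [← pow_add, ← pow_add]; congr 1; omega
  have hx3 : (X:ℤ[X])^(t n (d+1)) * X^(2*n+1-d) = X^(n+1) * X^(t n d) := by
    rw [← pow_add, ← pow_add]; congr 1; omega
  linear_combination ((-1:ℤ[X]))^(n+d) * B (2*n+1) (d+2) * hx1 + ((-1:ℤ[X]))^(n+d) * B (2*n+1) d * hx3

/-- the finite Jacobi triple product -/
noncomputable def G (n : ℕ) : Polynomial (ℤ[X]) :=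
  (∏ j ∈ Icc 1 n, (1 - Polynomial.C (X^j) * Polynomial.X)) *
    (∏ j ∈ Icc 0 n, (Polynomial.X - Polynomial.C (X^j)))

theorem JTP (n : ℕ) :
    G n = ∑ i ∈ range (2*n+2), Polynomial.C (c n i) * Polynomial.X ^ i := by
  induction n with
  | zero =>
    rw [G]
    rw [show Finset.Icc 1 0 = (∅ : Finset ℕ) by rfl, prod_empty, one_mul,
      show Finset.Icc 0 0 = {0} by rfl, prod_singleton]
    rw [show (2*0+2 : ℕ) = 2 by norm_num, sum_range_succ, sum_range_succ, sum_range_zero]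
    have hc0 : c 0 0 = -1 := by
      simp [c, t, B_zero, show T 0 = 0 from rfl]
    have hc1 : c 0 1 = 1 := by
      have : B (2*0+1) 1 = 1 := by norm_num [B_self]
      simp [c, t, this, show T 0 = 0 from rfl]
    rw [hc0, hc1]
    simp
    ring
  | succ n ih =>
    have hstep : G (n+1) = G n *
        ((1 - Polynomial.C ((X:ℤ[X])^(n+1)) * Polynomial.X) *
          (Polynomial.X - Polynomial.C ((X:ℤ[X])^(n+1)))) := by
      rw [G, G, prod_Icc_succ_top (show (1:ℕ) ≤ n+1 by omega),
        prod_Icc_succ_top (show (0:ℕ) ≤ n+1 by omega)]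
      ring
    rw [hstep, ih]
    set Z := (Polynomial.X : Polynomial (ℤ[X])) with hZ
    set a := Polynomial.C ((X:ℤ[X])^(n+1)) with ha
    set S := ∑ i ∈ range (2*n+2), Polynomial.C (c n i) * Z^i with hS
    have h1 : (1 : Polynomial (ℤ[X])) + a^2 = Polynomial.C (1 + (X:ℤ[X])^(2*n+2)) := by
      rw [ha, ← map_pow, ← pow_mul, show (n+1)*2 = 2*n+2 by ring, map_add, map_one]
    -- target sum, peel two bottom terms
    have htarget : ∑ i ∈ range (2*(n+1)+2), Polynomial.C (c (n+1) i) * Z^i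
        = (∑ i ∈ range (2*n+2), Polynomial.C (c (n+1) (i+2)) * Z^(i+2))
          + Polynomial.C (c (n+1) 1) * Z + Polynomial.C (c (n+1) 0) := by
      rw [show 2*(n+1)+2 = (2*n+3)+1 by ring, Finset.sum_range_succ']
      rw [show 2*n+3 = (2*n+2)+1 by ring, Finset.sum_range_succ']
      simp only [pow_zero, mul_one, pow_one]
      ring
    rw [htarget]
    -- rewrite via L2 and split
    have hL2 : ∀ i ∈ range (2*n+2), Polynomial.C (c (n+1) (i+2)) * Z^(i+2)
        = (1 + a^2) * (Polynomial.C (c n (i+1)) * Z^(i+2))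
          - a * (Polynomial.C (c n (i+2)) * Z^(i+2))
          - a * (Polynomial.C (c n i) * Z^(i+2)) := by
      intro i hi
      rw [mem_range] at hi
      rw [L2 (show i ≤ 2*n+1 by omega), map_sub, map_sub, map_mul, map_mul, map_mul, h1]
      ring
    rw [Finset.sum_congr rfl hL2]
    have hsplit : ∑ i ∈ range (2*n+2),
        ((1 + a^2) * (Polynomial.C (c n (i+1)) * Z^(i+2))
          - a * (Polynomial.C (c n (i+2)) * Z^(i+2))
          - a * (Polynomial.C (c n i) * Z^(i+2)))
        = (∑ i ∈ range (2*n+2), (1 + a^2) * (Polynomial.C (c n (i+1)) * Z^(i+2)))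
          - (∑ i ∈ range (2*n+2), a * (Polynomial.C (c n (i+2)) * Z^(i+2)))
          - (∑ i ∈ range (2*n+2), a * (Polynomial.C (c n i) * Z^(i+2))) := by
      rw [← Finset.sum_sub_distrib, ← Finset.sum_sub_distrib]
    rw [hsplit]
    have hA1 : ∑ i ∈ range (2*n+2), (1 + a^2) * (Polynomial.C (c n (i+1)) * Z^(i+2))
        = (1 + a^2) * (S * Z) - (1 + a^2) * (Polynomial.C (c n 0) * Z) := by
      have e1 : S * Z = ∑ i ∈ range (2*n+2), Polynomial.C (c n i) * Z^(i+1) := by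
        rw [hS, Finset.sum_mul]
        exact Finset.sum_congr rfl (fun i _ => by ring)
      have e2 : ∑ i ∈ range (2*n+2), Polynomial.C (c n i) * Z^(i+1)
          = (∑ i ∈ range (2*n+1), Polynomial.C (c n (i+1)) * Z^(i+2)) + Polynomial.C (c n 0) * Z := by
        rw [show 2*n+2 = (2*n+1)+1 by ring, Finset.sum_range_succ']
        norm_num
      have e3 : ∑ i ∈ range (2*n+2), (1 + a^2) * (Polynomial.C (c n (i+1)) * Z^(i+2))
          = (∑ i ∈ range (2*n+1), (1 + a^2) * (Polynomial.C (c n (i+1)) * Z^(i+2))) := by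
        rw [show 2*n+2 = (2*n+1)+1 by ring, Finset.sum_range_succ,
          c_eq_zero (show 2*n+1 < 2*n+1+1 by omega)]
        simp only [map_zero, zero_mul, mul_zero, add_zero]
      rw [e3, e1, e2, mul_add, Finset.mul_sum]
      ring
    have hA2 : ∑ i ∈ range (2*n+2), a * (Polynomial.C (c n (i+2)) * Z^(i+2))
        = a * S - a * (Polynomial.C (c n 1) * Z) - a * Polynomial.C (c n 0) := by
      have e4 : S = (∑ i ∈ range (2*n), Polynomial.C (c n (i+2)) * Z^(i+2))
          + Polynomial.C (c n 1) * Z + Polynomial.C (c n 0) := by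
        rw [hS, show 2*n+2 = (2*n+1)+1 by ring, Finset.sum_range_succ']
        rw [show 2*n+1 = (2*n)+1 by ring, Finset.sum_range_succ']
        simp only [pow_zero, mul_one, pow_one]
        ring
      have e5 : ∑ i ∈ range (2*n+2), a * (Polynomial.C (c n (i+2)) * Z^(i+2))
          = ∑ i ∈ range (2*n), a * (Polynomial.C (c n (i+2)) * Z^(i+2)) := by
        rw [show 2*n+2 = ((2*n)+1)+1 by ring, Finset.sum_range_succ, Finset.sum_range_succ]
        rw [c_eq_zero (show 2*n+1 < 2*n+1+2 by omega), c_eq_zero (show 2*n+1 < 2*n+2 by omega)]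
        simp only [map_zero, zero_mul, mul_zero, add_zero]
      rw [e5, e4, mul_add, mul_add, Finset.mul_sum]
      ring
    have hA3 : ∑ i ∈ range (2*n+2), a * (Polynomial.C (c n i) * Z^(i+2))
        = a * (S * Z^2) := by
      rw [hS, Finset.sum_mul, Finset.mul_sum]
      exact Finset.sum_congr rfl (fun i _ => by ring)
    rw [hA1, hA2, hA3]
    have hL0 : Polynomial.C (c (n+1) 0) = -(a * Polynomial.C (c n 0)) := by
      rw [L0, map_mul, map_neg, ← ha]
      ring
    have hL1 : Polynomial.C (c (n+1) 1)
        = (1 + a^2) * Polynomial.C (c n 0) - a * Polynomial.C (c n 1) := by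
      rw [L1, map_sub, map_mul, map_mul, ← h1, ← ha]
    rw [hL0, hL1]
    ring

theorem main_sq (n : ℕ) : E n * E n = ∑ i ∈ range (2*n+2), c n i * (i : ℤ[X]) := by
  have h := congrArg (fun p => Polynomial.eval (1:ℤ[X]) (Polynomial.derivative p)) (JTP n)
  -- LHS of h
  have hIcc : Finset.Icc 0 n = insert 0 (Finset.Icc 1 n) := by
    ext x
    simp
    omega
  have hK : G n = (Polynomial.X - 1) *
      ((∏ j ∈ Icc 1 n, (1 - Polynomial.C ((X:ℤ[X])^j) * Polynomial.X)) *
       (∏ j ∈ Icc 1 n, (Polynomial.X - Polynomial.C ((X:ℤ[X])^j)))) := by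
    rw [G, hIcc, prod_insert (by simp)]
    simp only [pow_zero, map_one]
    ring
  set K := (∏ j ∈ Icc 1 n, (1 - Polynomial.C ((X:ℤ[X])^j) * Polynomial.X)) *
       (∏ j ∈ Icc 1 n, (Polynomial.X - Polynomial.C ((X:ℤ[X])^j))) with hKdef
  have hder : Polynomial.derivative (G n) = K + (Polynomial.X - 1) * Polynomial.derivative K := by
    rw [hK, derivative_mul]
    simp
  have hevalK : Polynomial.eval (1:ℤ[X]) K = E n * E n := by
    rw [hKdef, eval_mul, eval_prod, eval_prod]
    rw [E]
    congr 1 <;>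
    · refine Finset.prod_congr rfl (fun j _ => ?_)
      simp
  have hlhs : Polynomial.eval (1:ℤ[X]) (Polynomial.derivative (G n)) = E n * E n := by
    rw [hder, eval_add, hevalK, eval_mul, eval_sub, eval_X, eval_one]
    ring
  -- RHS of h
  have hrhs : Polynomial.eval (1:ℤ[X]) (Polynomial.derivative
      (∑ i ∈ range (2*n+2), Polynomial.C (c n i) * Polynomial.X ^ i))
      = ∑ i ∈ range (2*n+2), c n i * (i : ℤ[X]) := by
    rw [map_sum Polynomial.derivative _ _, Polynomial.eval_finset_sum]
    refine Finset.sum_congr rfl (fun i _ => ?_)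
    rw [Polynomial.derivative_C_mul_X_pow, eval_mul, eval_C, eval_pow, eval_X, one_pow, mul_one]
  rw [← hlhs, ← hrhs, h]

lemma t_left {n k : ℕ} (h : k ≤ n) : t n (n-k) = T k := by
  unfold t
  rw [if_pos (by omega)]
  congr 1
  omega

lemma t_right (n k : ℕ) : t n (n+1+k) = T k := by
  unfold t
  rw [if_neg (by omega)]
  congr 1
  omega

lemma t_min_big {n i M : ℕ} (hM : M ≤ n) (hi : i ≤ 2*n+1) :
    M < t n i + (min i (2*n+1-i) + 1) := by
  rcases le_or_gt i n with h | h
  · have h1 : t n i = T (n-i) := by unfold t; rw [if_pos h]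
    have h2 := T_le (n-i)
    rw [h1, min_eq_left (by omega)]
    omega
  · have h1 : t n i = T (i-(n+1)) := by unfold t; rw [if_neg (by omega)]
    have h2 := T_le (i-(n+1))
    rw [h1, min_eq_right (by omega)]
    omega

/-- coefficient of a single term -/
lemma coeff_term {n i M : ℕ} (hM : M ≤ n) (hi : i ≤ 2*n+1) :
    (E n * c n i).coeff M = if M = t n i then (-1:ℤ)^(n+1+i) else 0 := by
  obtain ⟨u, hu⟩ := E_mul_B_unit hi
  have hEc : E n * c n i = Polynomial.C ((-1:ℤ)^(n+1+i)) *
      (X^(t n i) + u * X^(t n i + (min i (2*n+1-i) + 1))) := by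
    rw [c]
    have hC : ((-1 : ℤ[X]))^(n+1+i) = Polynomial.C ((-1:ℤ)^(n+1+i)) := by
      rw [map_pow, map_neg, map_one]
    rw [hC]
    have hXs : (X:ℤ[X])^(t n i + (min i (2*n+1-i) + 1))
        = X^(t n i) * X^(min i (2*n+1-i) + 1) := by rw [pow_add]
    linear_combination Polynomial.C ((-1:ℤ)^(n+1+i)) * X^(t n i) * hu +
      Polynomial.C ((-1:ℤ)^(n+1+i)) * u * hXs
  rw [hEc, Polynomial.coeff_C_mul, Polynomial.coeff_add, Polynomial.coeff_X_pow,
    Polynomial.coeff_mul_X_pow']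
  rw [if_neg (show ¬(t n i + (min i (2*n+1-i) + 1) ≤ M) from by
    have := t_min_big hM hi; omega)]
  by_cases hMt : M = t n i
  · rw [if_pos hMt, if_pos hMt]
    ring
  · rw [if_neg hMt, if_neg hMt]
    ring

lemma neg_one_sq_pow (k : ℕ) : ((-1:ℤ))^k * (-1)^k = 1 := by
  rw [← pow_add]
  exact Even.neg_one_pow ⟨k, by ring⟩

/-- the cube coefficient formula -/
lemma coeff_E_cube {n M : ℕ} (hM : M ≤ n) :
    (E n ^ 3).coeff M
      = ∑ k ∈ range (n+1), (if M = T k then (-1:ℤ)^k * (2*(k:ℤ)+1) else 0) := by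
  have h3 : E n ^ 3 = ∑ i ∈ range (2*n+2), E n * c n i * ((i : ℕ) : ℤ[X]) := by
    calc E n ^ 3 = E n * (E n * E n) := by ring
    _ = E n * ∑ i ∈ range (2*n+2), c n i * (i : ℤ[X]) := by rw [main_sq]
    _ = _ := by
      rw [Finset.mul_sum]
      exact Finset.sum_congr rfl (fun i _ => by ring)
  rw [h3, Polynomial.finset_sum_coeff]
  have hterm : ∀ i ∈ range (2*n+2),
      (E n * c n i * ((i : ℕ) : ℤ[X])).coeff M
        = (if M = t n i then (-1:ℤ)^(n+1+i) else 0) * (i : ℤ) := by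
    intro i hi
    rw [mem_range] at hi
    have : ((i : ℕ) : ℤ[X]) = Polynomial.C (i : ℤ) := by simp
    rw [this, Polynomial.coeff_mul_C, coeff_term hM (by omega)]
  rw [Finset.sum_congr rfl hterm]
  rw [show 2*n+2 = (n+1)+(n+1) by ring, Finset.sum_range_add]
  rw [← Finset.sum_range_reflect]
  rw [← Finset.sum_add_distrib]
  refine Finset.sum_congr rfl (fun k hk => ?_)
  rw [mem_range] at hk
  have hk' : k ≤ n := by omega
  rw [show n+1-1-k = n-k by omega, t_left hk', t_right n k]
  have hs1 : ((-1:ℤ))^(n+1+(n-k)) = -(-1:ℤ)^k := by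
    have h1 : ((-1:ℤ))^(n+1+(n-k)) * ((-1:ℤ)^k * (-1)^k) = (-1:ℤ)^(n+1+(n-k)+k) * (-1)^k := by
      rw [pow_add]
      ring
    rw [neg_one_sq_pow, mul_one, show n+1+(n-k)+k = 2*n+1 by omega] at h1
    rw [h1, Odd.neg_one_pow ⟨n, by ring⟩]
    ring
  have hs2 : ((-1:ℤ))^(n+1+(n+1+k)) = (-1:ℤ)^k := by
    rw [show n+1+(n+1+k) = 2*(n+1)+k by ring, pow_add, Even.neg_one_pow ⟨n+1, by ring⟩, one_mul]
  rw [hs1, hs2]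
  by_cases hMk : M = T k
  · rw [if_pos hMk, if_pos hMk, if_pos hMk]
    have hcast : ((n-k : ℕ) : ℤ) = (n:ℤ) - k := by omega
    push_cast [hcast]
    ring
  · rw [if_neg hMk, if_neg hMk, if_neg hMk]
    ring

/-- the double sum -/
noncomputable def SS (n : ℕ) : ℤ :=
  ∑ p ∈ range (n+1) ×ˢ range (n+1),
    (if T p.1 + 7 * T p.2 = n - 1 then
      ((-1:ℤ)^p.1 * (2*(p.1:ℤ)+1)) * ((-1:ℤ)^p.2 * (2*(p.2:ℤ)+1)) else 0)

lemma hprod (n : ℕ) :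
    (∏ k ∈ Icc 1 n, ((1 - X^k)^3 * (1 - X^(7*k))^3) : ℤ[X])
      = E n ^ 3 * (Polynomial.expand ℤ 7 (E n ^ 3)) := by
  have h1 : (E n)^3 = ∏ j ∈ Icc 1 n, (1 - X^j)^3 := by rw [E, Finset.prod_pow]
  have h2 : Polynomial.expand ℤ 7 ((E n)^3) = ∏ j ∈ Icc 1 n, (1 - (X:ℤ[X])^(7*j))^3 := by
    rw [h1, map_prod]
    refine Finset.prod_congr rfl (fun j _ => ?_)
    rw [map_pow, map_sub, map_one, map_pow, expand_X, ← pow_mul]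
  rw [Finset.prod_mul_distrib, h2, h1]

lemma coe_prod_eq (n : ℕ) :
    (∏ k ∈ Finset.Icc 1 n,
        ((1 - PowerSeries.X ^ k) ^ 3 * (1 - PowerSeries.X ^ (7 * k)) ^ 3) : PowerSeries ℤ)
      = ((∏ k ∈ Icc 1 n, ((1 - X^k)^3 * (1 - X^(7*k))^3) : ℤ[X]) : PowerSeries ℤ) := by
  conv_rhs => rw [← Polynomial.coeToPowerSeries.ringHom_apply, map_prod]
  refine Finset.prod_congr rfl (fun j _ => ?_)
  simp only [map_mul, map_pow, map_sub, map_one, Polynomial.coeToPowerSeries.ringHom_apply,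
    Polynomial.coe_X]

/-- the coefficient of the full product as the double sum -/
lemma a_eq_SS (n : ℕ) (hn : 1 ≤ n) :
    (PowerSeries.coeff (R := ℤ) n) (PowerSeries.X *
        ∏ k ∈ Finset.Icc 1 n,
          ((1 - PowerSeries.X ^ k) ^ 3 * (1 - PowerSeries.X ^ (7 * k)) ^ 3))
      = SS n := by
  rw [coe_prod_eq, hprod]
  rw [show n = (n-1)+1 by omega, PowerSeries.coeff_succ_X_mul, Polynomial.coeff_coe,
    show (n-1)+1 = n by omega]
  rw [Polynomial.coeff_mul]
  have hterm : ∀ p ∈ Finset.HasAntidiagonal.antidiagonal (n-1),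
      (E n ^ 3).coeff p.1 * (Polynomial.expand ℤ 7 (E n ^ 3)).coeff p.2
      = ∑ q ∈ range (n+1) ×ˢ range (n+1),
          (if p.1 = T q.1 then (-1:ℤ)^q.1 * (2*(q.1:ℤ)+1) else 0) *
          (if p.2 = 7 * T q.2 then (-1:ℤ)^q.2 * (2*(q.2:ℤ)+1) else 0) := by
    intro p hp
    rw [Finset.HasAntidiagonal.mem_antidiagonal] at hp
    have hp1 : p.1 ≤ n := by omega
    have hp2 : p.2 ≤ n - 1 := by omega
    rw [Polynomial.coeff_expand (by norm_num)]
    have hright : (if 7 ∣ p.2 then (E n ^ 3).coeff (p.2 / 7) else 0)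
        = ∑ r ∈ range (n+1), (if p.2 = 7 * T r then (-1:ℤ)^r * (2*(r:ℤ)+1) else 0) := by
      by_cases h7 : 7 ∣ p.2
      · rw [if_pos h7, coeff_E_cube (show p.2/7 ≤ n by omega)]
        refine Finset.sum_congr rfl (fun r _ => ?_)
        refine if_congr ⟨fun h => by omega, fun h => by omega⟩ rfl rfl
      · rw [if_neg h7]
        refine (Finset.sum_eq_zero (fun r _ => ?_)).symm
        rw [if_neg (fun h => h7 ⟨T r, h⟩)]
    rw [hright, coeff_E_cube hp1, Finset.sum_mul_sum]
    rw [← Finset.sum_product']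
  rw [Finset.sum_congr rfl hterm, Finset.sum_comm]
  rw [SS]
  refine Finset.sum_congr rfl (fun q hq => ?_)
  by_cases hc : T q.1 + 7 * T q.2 = n - 1
  · rw [if_pos hc]
    rw [Finset.sum_eq_single (T q.1, 7 * T q.2)]
    · rw [if_pos rfl, if_pos rfl]
    · intro p hp hne
      rcases Prod.mk.injEq .. ▸ (fun h => hne h) with _
      by_cases h1 : p.1 = T q.1
      · by_cases h2 : p.2 = 7 * T q.2
        · exact absurd (Prod.ext h1 h2) hne
        · rw [if_neg h2, mul_zero]
      · rw [if_neg h1, zero_mul]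
    · intro hmem
      exact absurd (Finset.HasAntidiagonal.mem_antidiagonal.mpr hc) hmem
  · rw [if_neg hc]
    refine Finset.sum_eq_zero (fun p hp => ?_)
    rw [Finset.HasAntidiagonal.mem_antidiagonal] at hp
    by_cases h1 : p.1 = T q.1
    · by_cases h2 : p.2 = 7 * T q.2
      · exfalso
        apply hc
        omega
      · rw [if_neg h2, mul_zero]
    · rw [if_neg h1, zero_mul]

lemma SS_seven {m : ℕ} (hm : 1 ≤ m) : SS (7*m) = -7 * SS m := by
  rw [SS, SS, ← Finset.sum_filter, ← Finset.sum_filter, Finset.mul_sum]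
  refine Finset.sum_nbij' (i := fun p => (p.2, (p.1 - 3)/7)) (j := fun q => (7*q.2+3, q.1))
    ?_ ?_ ?_ ?_ ?_
  · -- maps to
    rintro ⟨p1, p2⟩ hp
    rw [Finset.mem_filter, Finset.mem_product, Finset.mem_range, Finset.mem_range] at hp
    obtain ⟨⟨hp1, hp2⟩, heq⟩ := hp
    dsimp only at heq ⊢
    have h6 : T p1 % 7 = 6 := by omega
    have h3 := T_mod7 h6
    obtain ⟨k₁, hk₁⟩ : ∃ k₁, p1 = 7*k₁+3 := ⟨p1/7, by omega⟩
    subst hk₁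
    have hT7 := T_7 k₁
    have hdiv : (7*k₁+3 - 3)/7 = k₁ := by omega
    rw [Finset.mem_filter, Finset.mem_product, Finset.mem_range, Finset.mem_range, hdiv]
    have hb1 := T_le p2
    have hb2 := T_le k₁
    show (p2 < m+1 ∧ k₁ < m+1) ∧ T p2 + 7 * T k₁ = m - 1
    exact ⟨⟨by omega, by omega⟩, by omega⟩
  · -- maps back
    rintro ⟨q1, q2⟩ hq
    rw [Finset.mem_filter, Finset.mem_product, Finset.mem_range, Finset.mem_range] at hq
    obtain ⟨⟨hq1, hq2⟩, heq⟩ := hq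
    dsimp only at heq ⊢
    have hT7 := T_7 q2
    rw [Finset.mem_filter, Finset.mem_product, Finset.mem_range, Finset.mem_range]
    have hb1 := T_le q1
    have hb2 := T_le (7*q2+3)
    show (7*q2+3 < 7*m+1 ∧ q1 < 7*m+1) ∧ T (7*q2+3) + 7 * T q1 = 7*m - 1
    exact ⟨⟨by omega, by omega⟩, by omega⟩
  · -- left inverse
    rintro ⟨p1, p2⟩ hp
    rw [Finset.mem_filter, Finset.mem_product, Finset.mem_range, Finset.mem_range] at hp
    obtain ⟨⟨hp1, hp2⟩, heq⟩ := hp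
    dsimp only at heq ⊢
    have h6 : T p1 % 7 = 6 := by omega
    have h3 := T_mod7 h6
    have hh : 7*((p1-3)/7)+3 = p1 := by omega
    rw [hh]
  · -- right inverse
    rintro ⟨q1, q2⟩ hq
    dsimp only
    have : (7*q2+3-3)/7 = q2 := by omega
    rw [this]
  · -- weights
    rintro ⟨p1, p2⟩ hp
    rw [Finset.mem_filter, Finset.mem_product, Finset.mem_range, Finset.mem_range] at hp
    obtain ⟨⟨hp1, hp2⟩, heq⟩ := hp
    dsimp only at heq ⊢
    have h6 : T p1 % 7 = 6 := by omega
    have h3 := T_mod7 h6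
    obtain ⟨k₁, hk₁⟩ : ∃ k₁, p1 = 7*k₁+3 := ⟨p1/7, by omega⟩
    subst hk₁
    have hdiv : (7*k₁+3 - 3)/7 = k₁ := by omega
    rw [hdiv]
    have hsgn : ((-1:ℤ))^(7*k₁+3) = -(-1:ℤ)^k₁ := by
      rw [show 7*k₁+3 = k₁ + 2*(3*k₁+1) + 1 by ring, pow_succ, pow_add, pow_mul, neg_one_sq,
        one_pow]
      ring
    rw [hsgn]
    push_cast
    ring

theorem a_seven_pow (a : ℕ → ℤ) (hrec : ∀ m : ℕ, 1 ≤ m → a (7*m) = -7 * a m) :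
    ∀ k n : ℕ, 1 ≤ n → ((7:ℤ)^k) ∣ a (7^k * n) := by
  intro k
  induction k with
  | zero => intro n hn; simpa using one_dvd _
  | succ k ih =>
    intro n hn
    have h1 : 7^(k+1) * n = 7 * (7^k * n) := by ring
    have h2 : 0 < 7^k * n := by positivity
    rw [h1, hrec _ h2]
    obtain ⟨d, hd⟩ := ih n hn
    rw [hd]
    exact ⟨-d, by ring⟩

end Eta37

/-- Ramanujan type congruence for `η(τ)³η(7τ)³`: `a(7ᵏn) ≡ 0 (mod 7ᵏ)`. -/
theorem eta3_eta7_3_congruence (a : ℕ → ℤ)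
    (ha : ∀ n N : ℕ, n ≤ N →
      a n = (PowerSeries.coeff (R := ℤ) n)
        (PowerSeries.X *
          ∏ k ∈ Finset.Icc 1 N,
            ((1 - PowerSeries.X ^ k) ^ 3 * (1 - PowerSeries.X ^ (7 * k)) ^ 3))) :
    ∀ k n : ℕ, 1 ≤ n → ((7 : ℤ) ^ k) ∣ a (7 ^ k * n) := by
  have hA : ∀ m : ℕ, 1 ≤ m → a m = Eta37.SS m := by
    intro m hm
    rw [ha m m le_rfl]
    exact Eta37.a_eq_SS m hm
  have hrec : ∀ m : ℕ, 1 ≤ m → a (7*m) = -7 * a m := by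
    intro m hm
    rw [hA (7*m) (by omega), hA m hm, Eta37.SS_seven hm]
  exact Eta37.a_seven_pow a hrec
end

section
/- Define a(n) by ∑_{n≥1} a(n) qⁿ = q·∏_{k≥1} (1−q^k)²(1−q^{11k})² (the Fourier expansion of η(τ)²η(11τ)²). Then a(n) is even whenever n is a quadratic nonresidue modulo 11, i.e., whenever n mod 11 ∈ {2, 6, 7, 8, 10}. -/
set_option maxHeartbeats 1000000

open Finset

/-! Auxiliary: Franklin's involution on partitions into distinct parts. -/

private lemma fr_ex (S : Finset ℕ) (h : S.Nonempty) :
    ∃ x, Finset.Icc x (S.max' h) ⊆ S := by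
  refine ⟨S.max' h, ?_⟩
  simp only [Finset.Icc_self, Finset.singleton_subset_iff]
  exact S.max'_mem h

/-- Franklin's involution. -/
noncomputable def fr (S : Finset ℕ) : Finset ℕ :=
  if h : S.Nonempty then
    if S.min' h + Nat.find (fr_ex S h) ≤ S.max' h + 1 ∧
        ¬(Nat.find (fr_ex S h) = S.min' h ∧ S.min' h + S.min' h = S.max' h + 1) then
      insert (S.max' h + 1) ((S.erase (S.min' h)).erase (S.max' h + 1 - S.min' h))
    else
      insert (S.max' h + 1 - Nat.find (fr_ex S h))
        (insert (Nat.find (fr_ex S h) - 1) (S.erase (S.max' h)))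
  else ∅

lemma fr_eq_A (S : Finset ℕ) (h : S.Nonempty)
    (hA : S.min' h + Nat.find (fr_ex S h) ≤ S.max' h + 1 ∧
      ¬(Nat.find (fr_ex S h) = S.min' h ∧ S.min' h + S.min' h = S.max' h + 1)) :
    fr S = insert (S.max' h + 1) ((S.erase (S.min' h)).erase (S.max' h + 1 - S.min' h)) := by
  rw [fr, dif_pos h, if_pos hA]

lemma fr_eq_B (S : Finset ℕ) (h : S.Nonempty)
    (hB : ¬(S.min' h + Nat.find (fr_ex S h) ≤ S.max' h + 1 ∧
      ¬(Nat.find (fr_ex S h) = S.min' h ∧ S.min' h + S.min' h = S.max' h + 1))) :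
    fr S = insert (S.max' h + 1 - Nat.find (fr_ex S h))
        (insert (Nat.find (fr_ex S h) - 1) (S.erase (S.max' h))) := by
  rw [fr, dif_pos h, if_neg hB]

lemma twice_icc_sum (a b : ℕ) (h : a ≤ b) :
    2 * (∑ i ∈ Finset.Icc a b, i) + a * (a - 1) = (b + 1) * b := by
  have h1 : (∑ i ∈ Finset.Ico 0 a, i) + ∑ i ∈ Finset.Ico a (b+1), i
      = ∑ i ∈ Finset.Ico 0 (b+1), i :=
    Finset.sum_Ico_consecutive _ (Nat.zero_le a) (by omega)
  rw [Finset.Ico_add_one_right_eq_Icc] at h1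
  have h2 := Finset.sum_range_id_mul_two a
  have h3 := Finset.sum_range_id_mul_two (b+1)
  rw [Finset.range_eq_Ico] at h2 h3
  have hb : b + 1 - 1 = b := rfl
  rw [hb] at h3
  zify at h1 h2 h3 ⊢
  linarith

theorem fr_main {N v : ℕ} (hvN : v ≤ N)
    (h1 : ∀ s : ℕ, 2*v + s ≠ 3*s^2) (h2 : ∀ s : ℕ, 2*v + 5*s ≠ 3*s^2 + 2)
    {S : Finset ℕ} (hsub : S ⊆ Finset.Icc 1 N) (hsum : S.sum id = v) :
    (fr S ⊆ Finset.Icc 1 N ∧ (fr S).sum id = v) ∧ fr S ≠ S ∧ fr (fr S) = S := by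
  classical
  have hv0 : 0 < v := by
    have h10 := h1 0
    simp at h10
    omega
  have hsum' : ∑ x ∈ S, x = v := hsum
  have hne : S.Nonempty := by
    rcases S.eq_empty_or_nonempty with h | h
    · exfalso; rw [h] at hsum'; simp at hsum'; omega
    · exact h
  have hpos : ∀ x ∈ S, 1 ≤ x := fun x hx => (Finset.mem_Icc.mp (hsub hx)).1
  have hubN : ∀ x ∈ S, x ≤ N := fun x hx => (Finset.mem_Icc.mp (hsub hx)).2
  set s := S.min' hne with hs_def
  set L := S.max' hne with hL_def
  set b := Nat.find (fr_ex S hne) with hb_def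
  have hmin : ∀ x ∈ S, s ≤ x := fun x hx => Finset.min'_le S x hx
  have hmax : ∀ x ∈ S, x ≤ L := fun x hx => Finset.le_max' S x hx
  have hsS : s ∈ S := S.min'_mem hne
  have hLS : L ∈ S := S.max'_mem hne
  have hrun : Finset.Icc b L ⊆ S := Nat.find_spec (fr_ex S hne)
  have hbL : b ≤ L := by
    apply Nat.find_min' (fr_ex S hne)
    show Finset.Icc L L ⊆ S
    simp only [Finset.Icc_self, Finset.singleton_subset_iff]
    exact hLS
  have hbS : b ∈ S := hrun (Finset.mem_Icc.mpr ⟨le_rfl, hbL⟩)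
  have hsb : s ≤ b := hmin b hbS
  have hs1 : 1 ≤ s := hpos s hsS
  have hsL : s ≤ L := hmin L hLS
  have hbm : b - 1 ∉ S := by
    intro hmem
    have : ¬ (Finset.Icc (b-1) L ⊆ S) := Nat.find_min (fr_ex S hne) (by omega)
    apply this
    intro x hx
    rcases Finset.mem_Icc.mp hx with ⟨hx1, hx2⟩
    rcases eq_or_lt_of_le hx1 with h | h
    · rwa [← h]
    · exact hrun (Finset.mem_Icc.mpr ⟨by omega, hx2⟩)
  have hstair : b = s → S = Finset.Icc s L := by
    intro hbs
    apply Finset.Subset.antisymm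
    · intro x hx; exact Finset.mem_Icc.mpr ⟨hmin x hx, hmax x hx⟩
    · rw [← hbs]; exact hrun
  have hstairsum : S = Finset.Icc s L → 2*v + s*(s-1) = (L+1)*L := by
    intro hE
    have ht := twice_icc_sum s L hsL
    rw [← hE, hsum'] at ht
    exact ht
  have hfr_eq_A' : (s + b ≤ L + 1 ∧ ¬(b = s ∧ s + s = L + 1)) →
      fr S = insert (L+1) ((S.erase s).erase (L+1-s)) := by
    intro hA
    exact fr_eq_A S hne hA
  have hfr_eq_B' : ¬(s + b ≤ L + 1 ∧ ¬(b = s ∧ s + s = L + 1)) →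
      fr S = insert (L+1-b) (insert (b-1) (S.erase L)) := by
    intro hB
    exact fr_eq_B S hne hB
  clear_value s L b
  clear hs_def hL_def hb_def
  by_cases hA : s + b ≤ L + 1 ∧ ¬(b = s ∧ s + s = L + 1)
  · -- Case A
    have hfr : fr S = insert (L+1) ((S.erase s).erase (L+1-s)) := hfr_eq_A' hA
    have ha1 : b + s ≤ L + 1 := by omega
    have hC : L + 1 - s ∈ S := hrun (Finset.mem_Icc.mpr ⟨by omega, by omega⟩)
    have ha2 : s ≠ L + 1 - s := by
      intro h
      have hss : s + s = L + 1 := by omega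
      have hbs : b = s := by omega
      exact hA.2 ⟨hbs, hss⟩
    have hnsing : s ≠ L := by
      intro hEq
      have hb : b = s := by omega
      exact hA.2 ⟨hb, by omega⟩
    have hLes : L ∈ S.erase s := Finset.mem_erase.mpr ⟨by omega, hLS⟩
    have hsum1 : (∑ x ∈ S.erase s, x) + s = v := by
      rw [Finset.sum_erase_add S _ hsS, hsum']
    have hLv : L + s ≤ v := by
      have : L ≤ ∑ x ∈ S.erase s, x :=
        Finset.single_le_sum (f := fun x => x) (fun i _ => Nat.zero_le i) hLes
      omega
    have hCe : L + 1 - s ∈ S.erase s := Finset.mem_erase.mpr ⟨Ne.symm ha2, hC⟩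
    have hsum2 : (∑ x ∈ (S.erase s).erase (L+1-s), x) + (L+1-s) = ∑ x ∈ S.erase s, x :=
      Finset.sum_erase_add _ _ hCe
    have hLnew : L + 1 ∉ (S.erase s).erase (L+1-s) := by
      intro h
      have := hmax _ (Finset.mem_of_mem_erase (Finset.mem_of_mem_erase h))
      omega
    set A := insert (L+1) ((S.erase s).erase (L+1-s)) with hA_def
    have hsumA : ∑ x ∈ A, x = v := by
      rw [hA_def, Finset.sum_insert hLnew]; omega
    have hsubA : A ⊆ Finset.Icc 1 N := by
      intro x hx
      rcases Finset.mem_insert.mp hx with rfl | hx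
      · exact Finset.mem_Icc.mpr ⟨by omega, by omega⟩
      · exact hsub (Finset.mem_of_mem_erase (Finset.mem_of_mem_erase hx))
    have hAneS : A ≠ S := by
      intro h
      have : L + 1 ∈ S := by rw [← h]; exact Finset.mem_insert_self _ _
      have := hmax _ this; omega
    have hneA : A.Nonempty := ⟨L+1, Finset.mem_insert_self _ _⟩
    have hmemA : ∀ x, x ∈ A ↔ (x = L+1 ∨ (x ≠ L+1-s ∧ x ≠ s ∧ x ∈ S)) := by
      intro x
      simp only [hA_def, Finset.mem_insert, Finset.mem_erase]
    have hmaxA : A.max' hneA = L + 1 := by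
      apply le_antisymm
      · apply Finset.max'_le
        intro x hx
        rcases (hmemA x).1 hx with rfl | ⟨_, _, hxS⟩
        · exact le_rfl
        · have := hmax x hxS; omega
      · exact Finset.le_max' _ _ (Finset.mem_insert_self _ _)
    have hminA : s + 1 ≤ A.min' hneA := by
      apply Finset.le_min'
      intro x hx
      rcases (hmemA x).1 hx with rfl | ⟨_, hxs, hxS⟩
      · omega
      · have := hmin x hxS; omega
    set FA := Nat.find (fr_ex A hneA) with hFA_def
    have hfindA : FA = L + 2 - s := by
      rw [hFA_def, Nat.find_eq_iff]
      constructor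
      · rw [hmaxA]
        intro x hx
        rcases Finset.mem_Icc.mp hx with ⟨hx1, hx2⟩
        rcases eq_or_lt_of_le hx2 with h | h
        · rw [h]; exact Finset.mem_insert_self _ _
        · refine (hmemA x).2 (Or.inr ⟨by omega, by omega, ?_⟩)
          exact hrun (Finset.mem_Icc.mpr ⟨by omega, by omega⟩)
      · intro k hk hsubk
        rw [hmaxA] at hsubk
        have hmem : L+1-s ∈ A := hsubk (Finset.mem_Icc.mpr ⟨by omega, by omega⟩)
        rcases (hmemA _).1 hmem with h | ⟨h, _, _⟩
        · omega
        · exact h rfl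
    have hBA : ¬ (A.min' hneA + FA ≤ A.max' hneA + 1 ∧
        ¬(FA = A.min' hneA ∧
          A.min' hneA + A.min' hneA = A.max' hneA + 1)) := by
      rw [hfindA, hmaxA]
      intro hcon
      have := hcon.1
      omega
    have hfrA := fr_eq_B A hneA hBA
    rw [← hFA_def, hfindA, hmaxA] at hfrA
    have e1 : L + 1 + 1 - (L + 2 - s) = s := by omega
    have e2 : L + 2 - s - 1 = L + 1 - s := by omega
    have e3 : A.erase (L+1) = (S.erase s).erase (L+1-s) := by
      rw [hA_def, Finset.erase_insert hLnew]
    rw [e1, e2, e3] at hfrA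
    have e4 : insert (L+1-s) ((S.erase s).erase (L+1-s)) = S.erase s :=
      Finset.insert_erase hCe
    have e5 : insert s (S.erase s) = S := Finset.insert_erase hsS
    rw [e4, e5] at hfrA
    rw [hfr]
    exact ⟨⟨hsubA, hsumA⟩, hAneS, hfrA⟩
  · -- Case B
    have hBcond : ¬(s + b ≤ L + 1 ∧ ¬(b = s ∧ s + s = L + 1)) := hA
    have hb0 : L + 1 < s + b := by
      by_contra hcon
      push_neg at hcon
      have hA2 : b = s ∧ s + s = L + 1 := by
        by_contra h; exact hBcond ⟨hcon, h⟩
      obtain ⟨hbs, hLs⟩ := hA2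
      have hg := hstairsum (hstair hbs)
      exfalso; apply h1 s
      obtain ⟨q, rfl⟩ : ∃ q, s = q + 1 := ⟨s-1, by omega⟩
      have hL' : L = 2*q + 1 := by omega
      rw [hL'] at hg
      simp only [Nat.add_sub_cancel] at hg
      nlinarith [hg]
    have hσs : L + 1 - b < s := by omega
    have hb2 : 2 ≤ b := by omega
    have hcol : L + 1 - b ≠ b - 1 := by
      intro hc
      have hbs : b = s := by omega
      have hg := hstairsum (hstair hbs)
      apply h2 s
      have hL2 : L + 2 = s + s := by omega
      obtain ⟨q, rfl⟩ : ∃ q, s = q + 2 := ⟨s-2, by omega⟩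
      have hL' : L = 2*q + 2 := by omega
      rw [hL', show q + 2 - 1 = q + 1 from by omega] at hg
      nlinarith [hg]
    set B := insert (L+1-b) (insert (b-1) (S.erase L)) with hB_def
    have hbmE : b - 1 ∉ S.erase L := fun h => hbm (Finset.mem_of_mem_erase h)
    have hσm : L+1-b ∉ insert (b-1) (S.erase L) := by
      intro h
      rcases Finset.mem_insert.mp h with h | h
      · exact hcol h
      · have := hmin _ (Finset.mem_of_mem_erase h); omega
    have hfr : fr S = B := by
      rw [hB_def]; exact hfr_eq_B' hBcond
    have hsumEL : (∑ x ∈ S.erase L, x) + L = v := by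
      rw [Finset.sum_erase_add S _ hLS, hsum']
    have hsumB : ∑ x ∈ B, x = v := by
      rw [hB_def, Finset.sum_insert hσm, Finset.sum_insert hbmE]; omega
    have hsubB : B ⊆ Finset.Icc 1 N := by
      intro x hx
      have hLN : L ≤ N := hubN L hLS
      rcases Finset.mem_insert.mp hx with rfl | hx
      · exact Finset.mem_Icc.mpr ⟨by omega, by omega⟩
      · rcases Finset.mem_insert.mp hx with rfl | hx
        · exact Finset.mem_Icc.mpr ⟨by omega, by omega⟩
        · exact hsub (Finset.mem_of_mem_erase hx)
    have hBneS : B ≠ S := by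
      intro h
      have : L+1-b ∈ S := by rw [← h]; exact Finset.mem_insert_self _ _
      have := hmin _ this; omega
    have hneB : B.Nonempty := ⟨_, Finset.mem_insert_self _ _⟩
    have hmemB : ∀ x, x ∈ B ↔ (x = L+1-b ∨ x = b-1 ∨ (x ≠ L ∧ x ∈ S)) := by
      intro x
      simp only [hB_def, Finset.mem_insert, Finset.mem_erase]
    have hmaxB : B.max' hneB = L - 1 := by
      apply le_antisymm
      · apply Finset.max'_le
        intro x hx
        rcases (hmemB x).1 hx with rfl | h
        · omega
        · rcases h with rfl | ⟨hxL, hxS⟩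
          · omega
          · have := hmax x hxS; omega
      · apply Finset.le_max'
        rcases eq_or_lt_of_le hbL with h | h
        · refine (hmemB _).2 (Or.inr (Or.inl (by omega)))
        · refine (hmemB _).2 (Or.inr (Or.inr ⟨by omega, ?_⟩))
          exact hrun (Finset.mem_Icc.mpr ⟨by omega, by omega⟩)
    have hminBlow : ∀ x ∈ B, L+1-b ≤ x := by
      intro x hx
      rcases (hmemB x).1 hx with rfl | h
      · exact le_rfl
      · rcases h with rfl | ⟨_, hxS⟩
        · omega
        · have := hmin x hxS; omega
    have hminB : B.min' hneB = L+1-b := by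
      apply le_antisymm
      · exact Finset.min'_le _ _ ((hmemB _).2 (Or.inl rfl))
      · exact Finset.le_min' _ _ _ hminBlow
    set FB := Nat.find (fr_ex B hneB) with hFB_def
    have hfindB_le : FB ≤ b - 1 := by
      rw [hFB_def]
      apply Nat.find_min'
      rw [hmaxB]
      intro x hx
      rcases Finset.mem_Icc.mp hx with ⟨hx1, hx2⟩
      rcases eq_or_lt_of_le hx1 with h | h
      · exact (hmemB _).2 (Or.inr (Or.inl h.symm))
      · refine (hmemB _).2 (Or.inr (Or.inr ⟨by omega, ?_⟩))
        exact hrun (Finset.mem_Icc.mpr ⟨by omega, by omega⟩)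
    have hcondB : B.min' hneB + FB ≤ B.max' hneB + 1 ∧
        ¬(FB = B.min' hneB ∧
          B.min' hneB + B.min' hneB = B.max' hneB + 1) := by
      rw [hminB, hmaxB]
      constructor
      · omega
      · rintro ⟨hf, hss⟩
        omega
    have hfrB := fr_eq_A B hneB hcondB
    rw [hminB, hmaxB] at hfrB
    have e1 : L - 1 + 1 = L := by omega
    rw [e1] at hfrB
    have e2 : L - (L+1-b) = b - 1 := by omega
    rw [e2] at hfrB
    have e3 : B.erase (L+1-b) = insert (b-1) (S.erase L) := by
      rw [hB_def, Finset.erase_insert hσm]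
    rw [e3, Finset.erase_insert hbmE, Finset.insert_erase hLS] at hfrB
    rw [hfr]
    exact ⟨⟨hsubB, hsumB⟩, hBneS, hfrB⟩

lemma franklinZero {N v : ℕ} (hvN : v ≤ N)
    (h1 : ∀ s : ℕ, 2*v + s ≠ 3*s^2) (h2 : ∀ s : ℕ, 2*v + 5*s ≠ 3*s^2 + 2) :
    ∑ S ∈ (Finset.Icc 1 N).powerset.filter (fun S => S.sum id = v), (1 : ZMod 2) = 0 := by
  classical
  apply Finset.sum_involution (fun S _ => fr S)
  · intro S hS; decide
  · intro S hS _
    rw [Finset.mem_filter, Finset.mem_powerset] at hS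
    exact (fr_main hvN h1 h2 hS.1 hS.2).2.1
  · intro S hS
    rw [Finset.mem_filter, Finset.mem_powerset] at hS ⊢
    exact (fr_main hvN h1 h2 hS.1 hS.2).1
  · intro S hS
    rw [Finset.mem_filter, Finset.mem_powerset] at hS
    exact (fr_main hvN h1 h2 hS.1 hS.2).2.2

lemma resid1 {v : ℕ}
    (hv : v % 11 = 3 ∨ v % 11 = 6 ∨ v % 11 = 8 ∨ v % 11 = 9 ∨ v % 11 = 10) :
    ∀ s : ℕ, 2*v + s ≠ 3*s^2 := by
  intro s heq
  obtain ⟨q, r, hr, rfl⟩ : ∃ q r, r < 11 ∧ s = 11*q + r :=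
    ⟨s/11, s%11, Nat.mod_lt s (by norm_num), by omega⟩
  have expand : 3*(11*q + r)^2 = 363*(q*q) + 66*(q*r) + 3*(r*r) := by ring
  rw [expand] at heq
  have hrr : ∀ c, r = c → r*r = c*c := fun c hc => by rw [hc]
  interval_cases r <;> omega

lemma resid2 {v : ℕ}
    (hv : v % 11 = 3 ∨ v % 11 = 6 ∨ v % 11 = 8 ∨ v % 11 = 9 ∨ v % 11 = 10) :
    ∀ s : ℕ, 2*v + 5*s ≠ 3*s^2 + 2 := by
  intro s heq
  obtain ⟨q, r, hr, rfl⟩ : ∃ q r, r < 11 ∧ s = 11*q + r :=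
    ⟨s/11, s%11, Nat.mod_lt s (by norm_num), by omega⟩
  have expand : 3*(11*q + r)^2 = 363*(q*q) + 66*(q*r) + 3*(r*r) := by ring
  rw [expand] at heq
  interval_cases r <;> omega

/-- The coefficients of `η(τ)²η(11τ)² = q∏(1−q^k)²(1−q^{11k})²` are even on the
quadratic nonresidue classes mod 11. -/
theorem eta2_eta11_2_even (a : ℕ → ℤ)
    (ha : ∀ n N : ℕ, n ≤ N →
      a n = (PowerSeries.coeff (R := ℤ) n)
        (PowerSeries.X *
          ∏ k ∈ Finset.Icc 1 N,
            ((1 - PowerSeries.X ^ k) ^ 2 * (1 - PowerSeries.X ^ (11 * k)) ^ 2))) :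
    ∀ n : ℕ, (n % 11 = 2 ∨ n % 11 = 6 ∨ n % 11 = 7 ∨ n % 11 = 8 ∨ n % 11 = 10) →
      2 ∣ a n := by
  intro n hn
  classical
  have han := ha n n le_rfl
  rw [show (2:ℤ) = ((2:ℕ):ℤ) by norm_num, ← ZMod.intCast_zmod_eq_zero_iff_dvd]
  rw [han]
  set I := Finset.Icc 1 n with hI_def
  -- push the cast inside
  have hcast : (((PowerSeries.coeff (R := ℤ) n) (PowerSeries.X *
          ∏ k ∈ I, ((1 - PowerSeries.X ^ k) ^ 2 * (1 - PowerSeries.X ^ (11 * k)) ^ 2)) : ℤ)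
        : ZMod 2)
      = (PowerSeries.coeff (R := ZMod 2) n) (PowerSeries.X *
          ∏ k ∈ I, ((1 - PowerSeries.X ^ k) ^ 2 * (1 - PowerSeries.X ^ (11 * k)) ^ 2)) := by
    have h := (PowerSeries.coeff_map (f := Int.castRingHom (ZMod 2)) n
      (PowerSeries.X * ∏ k ∈ I,
        ((1 - PowerSeries.X ^ k) ^ 2 * (1 - PowerSeries.X ^ (11 * k)) ^ 2))).symm
    refine h.trans ?_
    congr 1
    simp only [map_mul, map_prod, map_pow, map_sub, map_one, PowerSeries.map_X]
  rw [hcast]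
  -- char 2 manipulations
  have h2ps : (2 : PowerSeries (ZMod 2)) = 0 := by
    have h := map_ofNat (PowerSeries.C (R := ZMod 2)) 2
    rw [← h, show ((2:ZMod 2)) = 0 by decide, map_zero]
  have sq1 : ∀ Y : PowerSeries (ZMod 2), (1 - Y)^2 = 1 + Y^2 := by
    intro Y
    have e : (1 - Y)^2 = 1 - 2*Y + Y^2 := by ring
    rw [e, h2ps]; ring
  have hprod : (∏ k ∈ I, ((1 - (PowerSeries.X : PowerSeries (ZMod 2)) ^ k) ^ 2
        * (1 - PowerSeries.X ^ (11 * k)) ^ 2))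
      = (∑ Sf ∈ I.powerset, PowerSeries.X ^ (∑ k ∈ Sf, k*2))
        * (∑ Tf ∈ I.powerset, PowerSeries.X ^ (∑ k ∈ Tf, 11*k*2)) := by
    calc ∏ k ∈ I, ((1 - (PowerSeries.X : PowerSeries (ZMod 2)) ^ k) ^ 2
            * (1 - PowerSeries.X ^ (11 * k)) ^ 2)
        = ∏ k ∈ I, ((PowerSeries.X ^ (k*2) + 1) * (PowerSeries.X ^ (11*k*2) + 1)) := by
          refine Finset.prod_congr rfl (fun k _ => ?_)
          rw [sq1, sq1, ← pow_mul, ← pow_mul, add_comm 1 ((PowerSeries.X:PowerSeries (ZMod 2)) ^ (k*2)),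
            add_comm 1 ((PowerSeries.X:PowerSeries (ZMod 2)) ^ (11*k*2))]
      _ = (∏ k ∈ I, (PowerSeries.X ^ (k*2) + 1))
            * ∏ k ∈ I, ((PowerSeries.X:PowerSeries (ZMod 2)) ^ (11*k*2) + 1) := by
          rw [Finset.prod_mul_distrib]
      _ = (∑ Sf ∈ I.powerset, PowerSeries.X ^ (∑ k ∈ Sf, k*2))
            * (∑ Tf ∈ I.powerset, PowerSeries.X ^ (∑ k ∈ Tf, 11*k*2)) := by
          rw [Finset.prod_add, Finset.prod_add]
          simp [Finset.prod_pow_eq_pow_sum]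
  rw [hprod, Finset.sum_mul_sum]
  simp only [Finset.mul_sum]
  have hterm : ∀ (c d : ℕ), (PowerSeries.X : PowerSeries (ZMod 2))
      * (PowerSeries.X ^ c * PowerSeries.X ^ d) = PowerSeries.X ^ (c + d + 1) := by
    intro c d
    rw [pow_succ, ← pow_add]
    ring
  simp only [hterm, map_sum, PowerSeries.coeff_X_pow]
  rw [Finset.sum_comm]
  apply Finset.sum_eq_zero
  intro Tf _
  by_cases hex : ∃ u, n = 2*u + 22*(Tf.sum id) + 1
  · obtain ⟨u, hu⟩ := hex
    have hT : ∑ k ∈ Tf, 11*k*2 = 22 * Tf.sum id := by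
      rw [Finset.mul_sum]
      exact Finset.sum_congr rfl (fun k _ => by simp [id]; ring)
    have hconv : ∀ Sf : Finset ℕ,
        ((if n = (∑ k ∈ Sf, k*2) + (∑ k ∈ Tf, 11*k*2) + 1 then (1:ZMod 2) else 0)
          = if Sf.sum id = u then 1 else 0) := by
      intro Sf
      have hS2 : ∑ k ∈ Sf, k*2 = 2 * Sf.sum id := by
        rw [Finset.mul_sum]
        exact Finset.sum_congr rfl (fun k _ => by simp [id]; ring)
      rw [hS2, hT]
      by_cases hc : Sf.sum id = u
      · rw [if_pos hc, if_pos (by omega)]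
      · rw [if_neg hc, if_neg (by omega)]
    rw [Finset.sum_congr rfl (fun Sf _ => hconv Sf), ← Finset.sum_filter]
    have hu11 : u % 11 = 3 ∨ u % 11 = 6 ∨ u % 11 = 8 ∨ u % 11 = 9 ∨ u % 11 = 10 := by
      omega
    exact franklinZero (by omega) (resid1 hu11) (resid2 hu11)
  · apply Finset.sum_eq_zero
    intro Sf _
    rw [if_neg]
    intro hc
    have hS2 : ∑ k ∈ Sf, k*2 = 2 * Sf.sum id := by
      rw [Finset.mul_sum]
      exact Finset.sum_congr rfl (fun k _ => by simp [id]; ring)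
    have hT : ∑ k ∈ Tf, 11*k*2 = 22 * Tf.sum id := by
      rw [Finset.mul_sum]
      exact Finset.sum_congr rfl (fun k _ => by simp [id]; ring)
    exact hex ⟨Sf.sum id, by omega⟩
end

section
/- Define a(n) by ∑_{n≥2} a(n) qⁿ = q²·∏_{k≥1} (1−q^k)⁴(1−q^{11k})⁴. Then a(n) is even whenever n is a nonzero quadratic residue modulo 11, i.e., whenever n mod 11 ∈ {1, 3, 4, 5, 9}. -/
open Finset

namespace Eta4Aux

/-- Bottom of the maximal run of consecutive integers ending at `max A`. -/
def runBot (A : Finset ℕ) (h : A.Nonempty) : ℕ :=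
  (A.filter fun x => Finset.Icc x (A.max' h) ⊆ A).min'
    ⟨A.max' h, by simp [A.max'_mem h, Finset.mem_filter]⟩

variable {A : Finset ℕ} (h : A.Nonempty)

lemma runBot_spec : runBot A h ∈ A ∧ Finset.Icc (runBot A h) (A.max' h) ⊆ A := by
  have h2 := Finset.min'_mem (A.filter fun x => Finset.Icc x (A.max' h) ⊆ A)
    ⟨A.max' h, by simp [A.max'_mem h]⟩
  exact Finset.mem_filter.1 h2

lemma runBot_mem : runBot A h ∈ A := (runBot_spec h).1

lemma Icc_runBot_subset : Finset.Icc (runBot A h) (A.max' h) ⊆ A := (runBot_spec h).2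

lemma runBot_le {x : ℕ} (hx : x ∈ A) (hs : Finset.Icc x (A.max' h) ⊆ A) :
    runBot A h ≤ x :=
  Finset.min'_le _ _ (Finset.mem_filter.2 ⟨hx, hs⟩)

lemma runBot_le_max : runBot A h ≤ A.max' h :=
  A.le_max' _ (runBot_mem h)

lemma min_le_runBot : A.min' h ≤ runBot A h :=
  A.min'_le _ (runBot_mem h)

lemma runBot_pred_not_mem (h0 : 0 ∉ A) : runBot A h - 1 ∉ A := by
  intro hmem
  have h1 : 1 ≤ runBot A h := Nat.one_le_iff_ne_zero.2 (by rintro hz; exact h0 (hz ▸ runBot_mem h))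
  have hsub : Finset.Icc (runBot A h - 1) (A.max' h) ⊆ A := by
    intro x hx
    rcases Finset.mem_Icc.1 hx with ⟨hx1, hx2⟩
    rcases Nat.eq_or_lt_of_le hx1 with heq | hlt
    · exact heq ▸ hmem
    · exact Icc_runBot_subset h (Finset.mem_Icc.2 ⟨by omega, hx2⟩)
  have := runBot_le h hmem hsub
  omega

lemma runBot_eq {c : ℕ} (hc1 : 1 ≤ c) (hcM : c ≤ A.max' h)
    (hsub : Finset.Icc c (A.max' h) ⊆ A) (hnot : c - 1 ∉ A) : runBot A h = c := by
  have hcA : c ∈ A := hsub (Finset.mem_Icc.2 ⟨le_rfl, hcM⟩)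
  refine le_antisymm (runBot_le h hcA hsub) ?_
  refine Finset.le_min' _ _ _ ?_
  intro y hy
  rcases Finset.mem_filter.1 hy with ⟨hyA, hysub⟩
  by_contra hlt
  push_neg at hlt
  exact hnot (hysub (Finset.mem_Icc.2 ⟨by omega, by omega⟩))

/-- If the top `m` entries of `A` form a run down to `M - m + 1`, then `m ≤ r`. -/
lemma le_run_of_Icc_subset (hsub : Finset.Icc (A.max' h - A.min' h + 1) (A.max' h) ⊆ A)
    (h0 : 0 ∉ A) : A.min' h ≤ A.max' h + 1 - runBot A h := by
  have hm1 : 1 ≤ A.min' h := Nat.one_le_iff_ne_zero.2 (by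
    rintro hz; exact h0 (hz ▸ A.min'_mem h))
  have hmM : A.min' h ≤ A.max' h := A.min'_le _ (A.max'_mem h)
  have := runBot_le h (hsub (Finset.mem_Icc.2 ⟨le_rfl, by omega⟩)) hsub
  omega

end Eta4Aux

namespace Eta4Aux

/-- Franklin's involution on finite sets of positive integers. -/
def phi (A : Finset ℕ) : Finset ℕ :=
  if h : A.Nonempty then
    if Finset.Icc (A.max' h - A.min' h + 1) (A.max' h) ⊆ A ∧ 2 * A.min' h ≤ A.max' h then
      insert (A.max' h + 1) ((A.erase (A.min' h)).erase (A.max' h - A.min' h + 1))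
    else if A.max' h + 1 - runBot A h < A.min' h ∧ A.max' h + 2 ≠ 2 * runBot A h then
      insert (runBot A h - 1)
        (insert (A.max' h + 1 - runBot A h) (A.erase (A.max' h)))
    else A
  else A

variable {A : Finset ℕ} (h : A.Nonempty)

lemma phi_case1
    (hc : Finset.Icc (A.max' h - A.min' h + 1) (A.max' h) ⊆ A ∧ 2 * A.min' h ≤ A.max' h) :
    phi A = insert (A.max' h + 1) ((A.erase (A.min' h)).erase (A.max' h - A.min' h + 1)) := by
  rw [phi, dif_pos h, if_pos hc]

lemma phi_case2
    (hnc : ¬(Finset.Icc (A.max' h - A.min' h + 1) (A.max' h) ⊆ A ∧ 2 * A.min' h ≤ A.max' h))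
    (hc : A.max' h + 1 - runBot A h < A.min' h ∧ A.max' h + 2 ≠ 2 * runBot A h) :
    phi A = insert (runBot A h - 1)
        (insert (A.max' h + 1 - runBot A h) (A.erase (A.max' h))) := by
  rw [phi, dif_pos h, if_neg hnc, if_pos hc]

lemma phi_case3
    (hnc : ¬(Finset.Icc (A.max' h - A.min' h + 1) (A.max' h) ⊆ A ∧ 2 * A.min' h ≤ A.max' h))
    (hnc2 : ¬(A.max' h + 1 - runBot A h < A.min' h ∧ A.max' h + 2 ≠ 2 * runBot A h)) :
    phi A = A := by
  rw [phi, dif_pos h, if_neg hnc, if_neg hnc2]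

lemma phi_empty (hA : ¬ A.Nonempty) : phi A = A := by rw [phi, dif_neg hA]

end Eta4Aux

namespace Eta4Aux

variable {A : Finset ℕ}

lemma min_pos (h : A.Nonempty) (h0 : 0 ∉ A) : 1 ≤ A.min' h :=
  Nat.one_le_iff_ne_zero.2 (by rintro hz; exact h0 (hz ▸ A.min'_mem h))

lemma max_not_mem_succ (h : A.Nonempty) : A.max' h + 1 ∉ A := by
  intro hmem
  have := A.le_max' _ hmem
  omega

/-- `phi` preserves the sum. -/
lemma phi_sum (h0 : 0 ∉ A) : ∑ x ∈ phi A, x = ∑ x ∈ A, x := by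
  by_cases h : A.Nonempty
  · set m := A.min' h with hm
    set M := A.max' h with hM
    set L := runBot A h with hL
    have hm1 : 1 ≤ m := min_pos h h0
    have hmM : m ≤ M := A.min'_le _ (A.max'_mem h)
    have hmA : m ∈ A := A.min'_mem h
    have hMA : M ∈ A := A.max'_mem h
    have hM1 : M + 1 ∉ A := max_not_mem_succ h
    by_cases hc1 : Finset.Icc (M - m + 1) M ⊆ A ∧ 2 * m ≤ M
    · rw [phi_case1 h hc1]
      have hmm : m < M - m + 1 := by omega
      have hmem : M - m + 1 ∈ A.erase m :=
        Finset.mem_erase.2 ⟨by omega, hc1.1 (Finset.mem_Icc.2 ⟨le_rfl, by omega⟩)⟩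
      have hnotin : M + 1 ∉ (A.erase m).erase (M - m + 1) := by
        intro hx
        exact hM1 (Finset.mem_of_mem_erase (Finset.mem_of_mem_erase hx))
      rw [Finset.sum_insert hnotin]
      have e1 : ∑ x ∈ A.erase m, x = (M - m + 1) + ∑ x ∈ (A.erase m).erase (M - m + 1), x :=
        (Finset.add_sum_erase _ _ hmem).symm
      have e2 : ∑ x ∈ A, x = m + ∑ x ∈ A.erase m, x := (Finset.add_sum_erase _ _ hmA).symm
      omega
    · by_cases hc2 : M + 1 - L < m ∧ M + 2 ≠ 2 * L
      · rw [phi_case2 h hc1 hc2]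
        have hmL : m ≤ L := min_le_runBot h
        have hLM : L ≤ M := runBot_le_max h
        have hL2 : M + 3 ≤ 2 * L := by omega
        have hr : M + 1 - L ∉ A := by
          intro hmem
          have := A.min'_le _ hmem
          omega
        have hLp : L - 1 ∉ A := runBot_pred_not_mem h h0
        have h1 : M + 1 - L ∉ A.erase M := fun hx => hr (Finset.mem_of_mem_erase hx)
        have h2 : L - 1 ∉ insert (M + 1 - L) (A.erase M) := by
          intro hx
          rcases Finset.mem_insert.1 hx with hx | hx
          · omega
          · exact hLp (Finset.mem_of_mem_erase hx)
        rw [Finset.sum_insert h2, Finset.sum_insert h1]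
        have e2 : ∑ x ∈ A, x = M + ∑ x ∈ A.erase M, x := (Finset.add_sum_erase _ _ hMA).symm
        omega
      · rw [phi_case3 h hc1 hc2]
  · rw [phi_empty h]

end Eta4Aux

namespace Eta4Aux

variable {A : Finset ℕ} {N : ℕ}

lemma phi_subset (hA : A ⊆ Finset.Icc 1 N) (hs : (∑ x ∈ A, x) + 1 ≤ N) :
    phi A ⊆ Finset.Icc 1 N := by
  by_cases h : A.Nonempty
  · have h0 : 0 ∉ A := fun hx => by simpa using hA hx
    set m := A.min' h with hm
    set M := A.max' h with hM
    set L := runBot A h with hL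
    have hm1 : 1 ≤ m := min_pos h h0
    have hmM : m ≤ M := A.min'_le _ (A.max'_mem h)
    have hMN : M ≤ N := (Finset.mem_Icc.1 (hA (A.max'_mem h))).2
    have hMs : M ≤ ∑ x ∈ A, x :=
      Finset.single_le_sum (f := fun x => x) (fun _ _ => Nat.zero_le _) (A.max'_mem h)
    by_cases hc1 : Finset.Icc (M - m + 1) M ⊆ A ∧ 2 * m ≤ M
    · rw [phi_case1 h hc1]
      intro x hx
      rcases Finset.mem_insert.1 hx with rfl | hx
      · exact Finset.mem_Icc.2 ⟨by omega, by omega⟩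
      · exact hA (Finset.mem_of_mem_erase (Finset.mem_of_mem_erase hx))
    · by_cases hc2 : M + 1 - L < m ∧ M + 2 ≠ 2 * L
      · rw [phi_case2 h hc1 hc2]
        have hmL : m ≤ L := min_le_runBot h
        have hLM : L ≤ M := runBot_le_max h
        intro x hx
        rcases Finset.mem_insert.1 hx with rfl | hx
        · exact Finset.mem_Icc.2 ⟨by omega, by omega⟩
        · rcases Finset.mem_insert.1 hx with rfl | hx
          · exact Finset.mem_Icc.2 ⟨by omega, by omega⟩
          · exact hA (Finset.mem_of_mem_erase hx)
      · rw [phi_case3 h hc1 hc2]; exact hA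
  · rw [phi_empty h]; exact hA

/-- If `phi` fixes a nonempty `A` (of positive integers), then `A` is a staircase with
pentagonal sum. -/
lemma phi_fixed (h : A.Nonempty) (h0 : 0 ∉ A) (hfix : phi A = A) :
    (∃ c, 1 ≤ c ∧ A = Finset.Icc c (2 * c - 1)) ∨
      (∃ c, 2 ≤ c ∧ A = Finset.Icc c (2 * c - 2)) := by
  set m := A.min' h with hm
  set M := A.max' h with hM
  set L := runBot A h with hL
  have hm1 : 1 ≤ m := min_pos h h0
  have hmM : m ≤ M := A.min'_le _ (A.max'_mem h)
  have hmL : m ≤ L := min_le_runBot h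
  have hLM : L ≤ M := runBot_le_max h
  have hsubA : ∀ x ∈ A, x ∈ Finset.Icc m M := fun x hx =>
    Finset.mem_Icc.2 ⟨A.min'_le _ hx, A.le_max' _ hx⟩
  by_cases hc1 : Finset.Icc (M - m + 1) M ⊆ A ∧ 2 * m ≤ M
  · exfalso
    rw [phi_case1 h hc1] at hfix
    have : M + 1 ∈ A := hfix ▸ Finset.mem_insert_self _ _
    exact max_not_mem_succ h this
  · by_cases hc2 : M + 1 - L < m ∧ M + 2 ≠ 2 * L
    · exfalso
      rw [phi_case2 h hc1 hc2] at hfix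
      have hMA : M ∈ A := A.max'_mem h
      rw [← hfix] at hMA
      rcases Finset.mem_insert.1 hMA with h1 | h1
      · omega
      · rcases Finset.mem_insert.1 h1 with h1 | h1
        · omega
        · exact (Finset.mem_erase.1 h1).1 rfl
    · -- exceptional cases
      push_neg at hc2
      by_cases hml : m ≤ M + 1 - L
      · -- then the top run reaches below `m`, and `¬(2m ≤ M)`
        left
        have hrun : Finset.Icc (M - m + 1) M ⊆ A := by
          refine subset_trans ?_ (Icc_runBot_subset h)
          exact Finset.Icc_subset_Icc (by omega) le_rfl
        have h2m : ¬(2 * m ≤ M) := fun hx => hc1 ⟨hrun, hx⟩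
        have hAeq : A = Finset.Icc m M := by
          apply Finset.Subset.antisymm (fun x hx => hsubA x hx)
          refine subset_trans (Finset.Icc_subset_Icc ?_ le_rfl) hrun
          omega
        have hMm : M - m + 1 ∈ A := hrun (Finset.mem_Icc.2 ⟨le_rfl, by omega⟩)
        have : m ≤ M - m + 1 := A.min'_le _ hMm
        refine ⟨m, hm1, ?_⟩
        rw [hAeq]
        congr 1
        omega
      · -- then `M + 2 = 2 L`
        right
        push_neg at hml
        have hL2 : M + 2 = 2 * L := hc2 hml
        have hmgeL : L ≤ m := by omega
        have hAeq : A = Finset.Icc L M := by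
          apply Finset.Subset.antisymm
          · intro x hx
            have := hsubA x hx
            rw [Finset.mem_Icc] at this ⊢
            omega
          · exact Icc_runBot_subset h
        refine ⟨L, by omega, ?_⟩
        rw [hAeq]
        congr 1
        omega

end Eta4Aux

namespace Eta4Aux

variable {A : Finset ℕ}

lemma max'_eq_of (h : A.Nonempty) {c : ℕ} (hc : c ∈ A) (hle : ∀ x ∈ A, x ≤ c) :
    A.max' h = c :=
  le_antisymm (Finset.max'_le _ _ _ hle) (A.le_max' _ hc)

lemma min'_eq_of (h : A.Nonempty) {c : ℕ} (hc : c ∈ A) (hle : ∀ x ∈ A, c ≤ x) :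
    A.min' h = c :=
  le_antisymm (A.min'_le _ hc) (Finset.le_min' _ _ _ hle)

/-- `phi` is an involution. -/
lemma phi_phi (h0 : 0 ∉ A) : phi (phi A) = A := by
  by_cases h : A.Nonempty
  · set m := A.min' h with hm
    set M := A.max' h with hM
    set L := runBot A h with hL
    have hm1 : 1 ≤ m := min_pos h h0
    have hmM : m ≤ M := A.min'_le _ (A.max'_mem h)
    have hmA : m ∈ A := A.min'_mem h
    have hMA : M ∈ A := A.max'_mem h
    have hM1 : M + 1 ∉ A := max_not_mem_succ h
    have hminle : ∀ x ∈ A, m ≤ x := fun x hx => A.min'_le _ hx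
    have hmaxle : ∀ x ∈ A, x ≤ M := fun x hx => A.le_max' _ hx
    by_cases hc1 : Finset.Icc (M - m + 1) M ⊆ A ∧ 2 * m ≤ M
    · rw [phi_case1 h hc1]
      set B := insert (M + 1) ((A.erase m).erase (M - m + 1)) with hB
      have hBmem : ∀ x, x ∈ B ↔ x = M + 1 ∨ (x ∈ A ∧ x ≠ m ∧ x ≠ M - m + 1) := by
        intro x
        simp only [hB, Finset.mem_insert, Finset.mem_erase]
        tauto
      have hBne : B.Nonempty := ⟨M + 1, Finset.mem_insert_self _ _⟩
      have h0B : 0 ∉ B := by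
        rw [hBmem]; push_neg; exact ⟨by omega, fun hx _ => absurd hx h0⟩
      have hMB : B.max' hBne = M + 1 := by
        refine max'_eq_of _ (Finset.mem_insert_self _ _) ?_
        intro x hx
        rcases (hBmem x).1 hx with rfl | ⟨hxA, -, -⟩
        · exact le_rfl
        · have := hmaxle x hxA; omega
      have hmB : m < B.min' hBne := by
        rcases (hBmem _).1 (B.min'_mem hBne) with heq | ⟨hx, hne, _⟩
        · omega
        · exact lt_of_le_of_ne (hminle _ hx) (Ne.symm hne)
      have hLB : runBot B hBne = M - m + 2 := by
        refine runBot_eq hBne (by omega) (by rw [hMB]; omega) ?_ ?_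
        · rw [hMB]
          intro x hx
          rcases Finset.mem_Icc.1 hx with ⟨hx1, hx2⟩
          rcases Nat.eq_or_lt_of_le hx2 with rfl | hlt
          · exact Finset.mem_insert_self _ _
          · refine (hBmem x).2 (Or.inr ⟨hc1.1 (Finset.mem_Icc.2 ⟨by omega, by omega⟩),
              by omega, by omega⟩)
        · rw [show M - m + 2 - 1 = M - m + 1 by omega, hBmem]
          push_neg
          refine ⟨by omega, fun _ _ => rfl⟩
      have hnc1B : ¬(Finset.Icc (B.max' hBne - B.min' hBne + 1) (B.max' hBne) ⊆ B ∧
          2 * B.min' hBne ≤ B.max' hBne) := by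
        rintro ⟨hs, -⟩
        have := le_run_of_Icc_subset hBne hs h0B
        rw [hMB, hLB] at this
        omega
      have hc2B : B.max' hBne + 1 - runBot B hBne < B.min' hBne ∧
          B.max' hBne + 2 ≠ 2 * runBot B hBne := by
        rw [hMB, hLB]
        constructor <;> omega
      rw [phi_case2 hBne hnc1B hc2B, hMB, hLB,
        show M - m + 2 - 1 = M - m + 1 by omega,
        show M + 1 + 1 - (M - m + 2) = m by omega]
      have hBer : B.erase (M + 1) = (A.erase m).erase (M - m + 1) := by
        rw [hB, Finset.erase_insert]
        intro hx
        exact hM1 (Finset.mem_of_mem_erase (Finset.mem_of_mem_erase hx))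
      rw [hBer, Finset.insert_comm, Finset.insert_erase
        (Finset.mem_erase.2 ⟨by omega, hc1.1 (Finset.mem_Icc.2 ⟨le_rfl, by omega⟩)⟩),
        Finset.insert_erase hmA]
    · by_cases hc2 : M + 1 - L < m ∧ M + 2 ≠ 2 * L
      · rw [phi_case2 h hc1 hc2]
        have hmL : m ≤ L := min_le_runBot h
        have hLM : L ≤ M := runBot_le_max h
        have hL3 : M + 3 ≤ 2 * L := by omega
        have hrA : M + 1 - L ∉ A := fun hx => by have := hminle _ hx; omega
        have hLpA : L - 1 ∉ A := runBot_pred_not_mem h h0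
        have hIccLM : Finset.Icc L M ⊆ A := Icc_runBot_subset h
        set B := insert (L - 1) (insert (M + 1 - L) (A.erase M)) with hB
        have hBmem : ∀ x, x ∈ B ↔ x = L - 1 ∨ x = M + 1 - L ∨ (x ∈ A ∧ x ≠ M) := by
          intro x
          simp only [hB, Finset.mem_insert, Finset.mem_erase]
          tauto
        have hBne : B.Nonempty := ⟨L - 1, Finset.mem_insert_self _ _⟩
        have hMB : B.max' hBne = M - 1 := by
          refine max'_eq_of _ ?_ ?_
          · rcases Nat.eq_or_lt_of_le hLM with heq | hlt
            · exact (hBmem _).2 (Or.inl (by omega))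
            · exact (hBmem _).2 (Or.inr (Or.inr
                ⟨hIccLM (Finset.mem_Icc.2 ⟨by omega, by omega⟩), by omega⟩))
          · intro x hx
            rcases (hBmem x).1 hx with rfl | hx'
            · omega
            · rcases hx' with rfl | ⟨hxA, hne⟩
              · omega
              · have := hmaxle x hxA; omega
        have hmB : B.min' hBne = M + 1 - L := by
          refine min'_eq_of _ ((hBmem _).2 (Or.inr (Or.inl rfl))) ?_
          intro x hx
          rcases (hBmem x).1 hx with rfl | hx'
          · omega
          · rcases hx' with rfl | ⟨hxA, -⟩
            · omega
            · have := hminle _ hxA; omega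
        have hc1B : Finset.Icc (B.max' hBne - B.min' hBne + 1) (B.max' hBne) ⊆ B ∧
            2 * B.min' hBne ≤ B.max' hBne := by
          rw [hMB, hmB]
          constructor
          · rw [show M - 1 - (M + 1 - L) + 1 = L - 1 by omega]
            intro x hx
            rcases Finset.mem_Icc.1 hx with ⟨hx1, hx2⟩
            rcases Nat.eq_or_lt_of_le hx1 with rfl | hlt
            · exact (hBmem _).2 (Or.inl rfl)
            · exact (hBmem x).2 (Or.inr (Or.inr
                ⟨hIccLM (Finset.mem_Icc.2 ⟨by omega, by omega⟩), by omega⟩))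
          · omega
        rw [phi_case1 hBne hc1B, hMB, hmB,
          show M - 1 - (M + 1 - L) + 1 = L - 1 by omega,
          show M - 1 + 1 = M by omega]
        have h1 : B.erase (M + 1 - L) = insert (L - 1) (A.erase M) := by
          rw [hB, Finset.erase_insert_of_ne (by omega), Finset.erase_insert
            (fun hx => hrA (Finset.mem_of_mem_erase hx))]
        rw [h1, Finset.erase_insert (fun hx => hLpA (Finset.mem_of_mem_erase hx)),
          Finset.insert_erase hMA]
      · rw [phi_case3 h hc1 hc2, phi_case3 h hc1 hc2]
  · rw [phi_empty h, phi_empty h]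

end Eta4Aux

namespace Eta4Aux

lemma sum_type1 (c : ℕ) (hc : 1 ≤ c) :
    (∑ x ∈ Finset.Icc c (2 * c - 1), x) * 2 + c = 3 * (c * c) := by
  have h1 : Finset.Icc c (2 * c - 1) = Finset.Ico c (2 * c) := by
    rw [← Finset.Ico_add_one_right_eq_Icc]
    congr 1
    omega
  rw [h1, Finset.sum_Ico_eq_sum_range, show 2 * c - c = c by omega]
  have h2 := Finset.sum_range_id_mul_two c
  have h3 : ∑ i ∈ Finset.range c, (c + i) = c * c + ∑ i ∈ Finset.range c, i := by
    rw [Finset.sum_add_distrib, Finset.sum_const, Finset.card_range, smul_eq_mul]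
  rw [h3]
  zify [hc] at h2 ⊢
  linear_combination h2

lemma sum_type2 (c : ℕ) (hc : 2 ≤ c) :
    (∑ x ∈ Finset.Icc c (2 * c - 2), x) * 2 + 5 * c = 3 * (c * c) + 2 := by
  have h1 : Finset.Icc c (2 * c - 2) = Finset.Ico c (2 * c - 1) := by
    rw [← Finset.Ico_add_one_right_eq_Icc]
    congr 1
    omega
  rw [h1, Finset.sum_Ico_eq_sum_range, show 2 * c - 1 - c = c - 1 by omega]
  have h2 := Finset.sum_range_id_mul_two (c - 1)
  have h3 : ∑ i ∈ Finset.range (c - 1), (c + i) =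
      (c - 1) * c + ∑ i ∈ Finset.range (c - 1), i := by
    rw [Finset.sum_add_distrib, Finset.sum_const, Finset.card_range, smul_eq_mul]
  rw [h3]
  zify [hc, show 1 ≤ c by omega, show 1 ≤ c - 1 by omega, show 2 ≤ c - 1 + 1 by omega] at h2 ⊢
  linear_combination h2

lemma key0 : ∀ t : ZMod 11,
    ¬(2 + 4 * 0 + 44 * t = 1 ∨ 2 + 4 * 0 + 44 * t = 3 ∨ 2 + 4 * 0 + 44 * t = 4 ∨
      2 + 4 * 0 + 44 * t = 5 ∨ 2 + 4 * 0 + 44 * t = 9) := by decide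

lemma key1 : ∀ x s t : ZMod 11, s * 2 + x = 3 * (x * x) →
    ¬(2 + 4 * s + 44 * t = 1 ∨ 2 + 4 * s + 44 * t = 3 ∨ 2 + 4 * s + 44 * t = 4 ∨
      2 + 4 * s + 44 * t = 5 ∨ 2 + 4 * s + 44 * t = 9) := by decide

lemma key2 : ∀ x s t : ZMod 11, s * 2 + 5 * x = 3 * (x * x) + 2 →
    ¬(2 + 4 * s + 44 * t = 1 ∨ 2 + 4 * s + 44 * t = 3 ∨ 2 + 4 * s + 44 * t = 4 ∨
      2 + 4 * s + 44 * t = 5 ∨ 2 + 4 * s + 44 * t = 9) := by decide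

lemma not_fixed {n : ℕ} {S T : Finset ℕ} (h0 : 0 ∉ S)
    (hsum : n = 2 + 4 * (∑ x ∈ S, x) + 44 * (∑ x ∈ T, x))
    (hn : n % 11 = 1 ∨ n % 11 = 3 ∨ n % 11 = 4 ∨ n % 11 = 5 ∨ n % 11 = 9) :
    phi S ≠ S := by
  intro hfix
  have hcast : (2 + 4 * (∑ x ∈ S, (x : ZMod 11)) + 44 * (∑ x ∈ T, (x : ZMod 11)) = 1 ∨
      2 + 4 * (∑ x ∈ S, (x : ZMod 11)) + 44 * (∑ x ∈ T, (x : ZMod 11)) = 3 ∨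
      2 + 4 * (∑ x ∈ S, (x : ZMod 11)) + 44 * (∑ x ∈ T, (x : ZMod 11)) = 4 ∨
      2 + 4 * (∑ x ∈ S, (x : ZMod 11)) + 44 * (∑ x ∈ T, (x : ZMod 11)) = 5 ∨
      2 + 4 * (∑ x ∈ S, (x : ZMod 11)) + 44 * (∑ x ∈ T, (x : ZMod 11)) = 9) := by
    have hn2 : (n : ZMod 11) =
        2 + 4 * (∑ x ∈ S, (x : ZMod 11)) + 44 * (∑ x ∈ T, (x : ZMod 11)) := by
      rw [hsum]; push_cast; ring
    have hmod : ((n % 11 : ℕ) : ZMod 11) = (n : ZMod 11) := ZMod.natCast_mod n 11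
    rcases hn with h | h | h | h | h <;> rw [h] at hmod <;> rw [← hn2, ← hmod] <;> norm_num
  by_cases hS : S.Nonempty
  · rcases phi_fixed hS h0 hfix with ⟨c, hc, hSeq⟩ | ⟨c, hc, hSeq⟩
    · have h1 := sum_type1 c hc
      rw [← hSeq] at h1
      have h2 := congrArg (Nat.cast : ℕ → ZMod 11) h1
      push_cast at h2
      exact key1 _ _ _ h2 hcast
    · have h1 := sum_type2 c hc
      rw [← hSeq] at h1
      have h2 := congrArg (Nat.cast : ℕ → ZMod 11) h1
      push_cast at h2
      exact key2 _ _ _ h2 hcast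
  · rw [Finset.not_nonempty_iff_eq_empty] at hS
    subst hS
    simp only [Finset.sum_empty] at hcast
    exact key0 _ hcast

lemma char2_pow4 (Y : PowerSeries (ZMod 2)) : (1 - Y) ^ 4 = 1 + Y ^ 4 := by
  have h2 : (2 : PowerSeries (ZMod 2)) = 0 := by
    rw [← map_ofNat (PowerSeries.C (R := ZMod 2)) 2, show (2 : ZMod 2) = 0 by decide, map_zero]
  linear_combination (-2 * Y + 3 * Y ^ 2 - 2 * Y ^ 3) * h2

lemma map_eq (n : ℕ) :
    PowerSeries.map (Int.castRingHom (ZMod 2))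
        (PowerSeries.X ^ 2 * ∏ k ∈ Finset.Icc 1 n,
          ((1 - PowerSeries.X ^ k) ^ 4 * (1 - PowerSeries.X ^ (11 * k)) ^ 4)) =
      PowerSeries.X ^ 2 * ∏ k ∈ Finset.Icc 1 n,
        ((1 + PowerSeries.X ^ (4 * k)) * (1 + PowerSeries.X ^ (44 * k))) := by
  rw [map_mul, map_pow, PowerSeries.map_X, map_prod]
  refine congrArg _ (Finset.prod_congr rfl fun k _ => ?_)
  simp only [map_mul, map_pow, map_sub, map_one, PowerSeries.map_X]
  rw [char2_pow4, char2_pow4, ← pow_mul, ← pow_mul, mul_comm k 4,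
    show 11 * k * 4 = 44 * k by ring]

lemma expand_prod (c n : ℕ) :
    ∏ k ∈ Finset.Icc 1 n, (1 + (PowerSeries.X : PowerSeries (ZMod 2)) ^ (c * k)) =
      ∑ S ∈ (Finset.Icc 1 n).powerset, PowerSeries.X ^ (∑ i ∈ S, c * i) := by
  have h := Finset.prod_add (fun k => (PowerSeries.X : PowerSeries (ZMod 2)) ^ (c * k))
    (fun _ => (1 : PowerSeries (ZMod 2))) (Finset.Icc 1 n)
  simp only [Finset.prod_const_one, mul_one] at h
  calc ∏ k ∈ Finset.Icc 1 n, (1 + (PowerSeries.X : PowerSeries (ZMod 2)) ^ (c * k))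
      = ∏ k ∈ Finset.Icc 1 n, ((PowerSeries.X : PowerSeries (ZMod 2)) ^ (c * k) + 1) := by
        simp_rw [add_comm]
    _ = ∑ S ∈ (Finset.Icc 1 n).powerset, ∏ i ∈ S, (PowerSeries.X : PowerSeries (ZMod 2)) ^ (c * i) := h
    _ = ∑ S ∈ (Finset.Icc 1 n).powerset, PowerSeries.X ^ (∑ i ∈ S, c * i) := by
        refine Finset.sum_congr rfl fun S _ => ?_
        rw [Finset.prod_pow_eq_pow_sum]

lemma coeff_even (n : ℕ)
    (hn : n % 11 = 1 ∨ n % 11 = 3 ∨ n % 11 = 4 ∨ n % 11 = 5 ∨ n % 11 = 9) :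
    (PowerSeries.coeff (R := ZMod 2) n)
      (PowerSeries.X ^ 2 * ∏ k ∈ Finset.Icc 1 n,
        ((1 + PowerSeries.X ^ (4 * k)) * (1 + PowerSeries.X ^ (44 * k)))) = 0 := by
  rw [Finset.prod_mul_distrib, expand_prod 4 n, expand_prod 44 n, Finset.sum_mul_sum,
    Finset.mul_sum]
  simp_rw [Finset.mul_sum]
  have hpow : ∀ s t : ℕ, (PowerSeries.X : PowerSeries (ZMod 2)) ^ 2 *
      (PowerSeries.X ^ s * PowerSeries.X ^ t) = PowerSeries.X ^ (2 + s + t) := by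
    intro s t
    rw [← pow_add, ← pow_add, Nat.add_assoc]
  simp_rw [hpow, map_sum, PowerSeries.coeff_X_pow]
  rw [← Finset.sum_product']
  rw [← Finset.sum_filter]
  set D := ((Finset.Icc 1 n).powerset ×ˢ (Finset.Icc 1 n).powerset).filter
    (fun p => n = 2 + ∑ i ∈ p.1, 4 * i + ∑ i ∈ p.2, 44 * i) with hD
  have hfacts : ∀ p ∈ D, p.1 ⊆ Finset.Icc 1 n ∧ p.2 ⊆ Finset.Icc 1 n ∧
      n = 2 + 4 * (∑ i ∈ p.1, i) + 44 * (∑ i ∈ p.2, i) := by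
    intro p hp
    rcases Finset.mem_filter.1 hp with ⟨hp1, hp2⟩
    rcases Finset.mem_product.1 hp1 with ⟨hS, hT⟩
    refine ⟨Finset.mem_powerset.1 hS, Finset.mem_powerset.1 hT, ?_⟩
    rw [Finset.mul_sum, Finset.mul_sum]
    exact hp2
  have hzero : ∀ p ∈ D, 0 ∉ p.1 := by
    intro p hp hx
    have := (hfacts p hp).1 hx
    simp at this
  refine Finset.sum_involution (fun p _ => (phi p.1, p.2)) (fun _ _ => by decide)
    (fun p hp _ heq => ?_) (fun p hp => ?_) (fun p hp => ?_)
  · exact not_fixed (hzero p hp) (hfacts p hp).2.2 hn (congrArg Prod.fst heq)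
  · rcases hfacts p hp with ⟨hS, hT, hsum⟩
    have hbound : (∑ x ∈ p.1, x) + 1 ≤ n := by omega
    refine Finset.mem_filter.2 ⟨Finset.mem_product.2
      ⟨Finset.mem_powerset.2 (phi_subset hS hbound), Finset.mem_powerset.2 hT⟩, ?_⟩
    show n = 2 + ∑ i ∈ phi p.1, 4 * i + ∑ i ∈ p.2, 44 * i
    rw [← Finset.mul_sum, ← Finset.mul_sum, phi_sum (hzero p hp)]
    exact hsum
  · show (phi (phi p.1), p.2) = p
    rw [phi_phi (hzero p hp)]

end Eta4Aux

/-- The coefficients of `η(τ)⁴η(11τ)⁴` are even on the nonzero quadratic residue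
classes mod 11. -/
theorem eta4_eta11_4_even (a : ℕ → ℤ)
    (ha : ∀ n N : ℕ, n ≤ N →
      a n = (PowerSeries.coeff (R := ℤ) n)
        (PowerSeries.X ^ 2 *
          ∏ k ∈ Finset.Icc 1 N,
            ((1 - PowerSeries.X ^ k) ^ 4 * (1 - PowerSeries.X ^ (11 * k)) ^ 4))) :
    ∀ n : ℕ, (n % 11 = 1 ∨ n % 11 = 3 ∨ n % 11 = 4 ∨ n % 11 = 5 ∨ n % 11 = 9) →
      2 ∣ a n := by
  intro n hn
  have h1 := ha n n le_rfl
  have hz : ((a n : ℤ) : ZMod 2) = 0 := by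
    rw [h1]
    have hco : (((PowerSeries.coeff (R := ℤ) n)
        (PowerSeries.X ^ 2 * ∏ k ∈ Finset.Icc 1 n,
          ((1 - PowerSeries.X ^ k) ^ 4 * (1 - PowerSeries.X ^ (11 * k)) ^ 4)) : ℤ) : ZMod 2) =
        (PowerSeries.coeff (R := ZMod 2) n) (PowerSeries.map (Int.castRingHom (ZMod 2))
          (PowerSeries.X ^ 2 * ∏ k ∈ Finset.Icc 1 n,
            ((1 - PowerSeries.X ^ k) ^ 4 * (1 - PowerSeries.X ^ (11 * k)) ^ 4))) := by
      rw [PowerSeries.coeff_map]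
      rfl
    rw [hco, Eta4Aux.map_eq, Eta4Aux.coeff_even n hn]
  have := (ZMod.intCast_zmod_eq_zero_iff_dvd (a n) 2).1 hz
  exact_mod_cast this
end
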